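/- arXiv:1502.06528 — 13 statements merged into one kernel-verified Lean document; each statement's English description precedes it below -/
import Mathlib

section
/- Let n : ℕ and let f : Finset (Fin n) → ℝ be nonnegative, nonincreasing (S ⊆ T implies f(T) ≤ f(S)), and supermodular, i.e. f(S ∩ T) + f(S ∪ T) ≥ f(S) + f(T) for all S, T ⊆ Fin n. Then f is weakly-1-supermodular: for all S, T ⊆ Fin n with T \ S nonempty, f(S) - f(S ∪ T) ≤ |T \ S| · max_{i ∈ T \ S} (f(S) - f(S ∪ {i})). -/
/-- A set function is supermodular if `f (S ∩ T) + f (S ∪ T) ≥ f S + f T`. -/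
def Supermodular {n : ℕ} (f : Finset (Fin n) → ℝ) : Prop :=
  ∀ S T : Finset (Fin n), f S + f T ≤ f (S ∩ T) + f (S ∪ T)

lemma supermodular_sum_bound {n : ℕ} (f : Finset (Fin n) → ℝ)
    (hsup : Supermodular f) (S : Finset (Fin n)) :
    ∀ U : Finset (Fin n), Disjoint U S →
      f S - f (S ∪ U) ≤ ∑ i ∈ U, (f S - f (S ∪ {i})) := by
  intro U
  induction U using Finset.induction_on with
  | empty => simp
  | @insert i U hi ih =>
    intro hdisj
    have hdU : Disjoint U S := (Finset.disjoint_insert_left.mp hdisj).2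
    have hiS : i ∉ S := (Finset.disjoint_insert_left.mp hdisj).1
    rw [Finset.sum_insert hi]
    have key := hsup (S ∪ U) (S ∪ {i})
    have hint : (S ∪ U) ∩ (S ∪ {i}) = S := by
      rw [← Finset.union_inter_distrib_left]
      have : U ∩ {i} = ∅ := by
        apply Finset.eq_empty_of_forall_notMem
        intro x hx
        simp at hx
        exact hi (hx.2 ▸ hx.1)
      simp [this]
    have huni : (S ∪ U) ∪ (S ∪ {i}) = S ∪ insert i U := by
      ext x; simp [or_comm, or_assoc, or_left_comm]
    rw [hint, huni] at key
    have := ih hdU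
    linarith

/-- A nonnegative, nonincreasing, supermodular set function is weakly-1-supermodular. -/
theorem supermodular_implies_weakly_one_supermodular
    (n : ℕ) (f : Finset (Fin n) → ℝ)
    (hnonneg : ∀ S : Finset (Fin n), 0 ≤ f S)
    (hmono : ∀ S T : Finset (Fin n), S ⊆ T → f T ≤ f S)
    (hsup : Supermodular f) :
    ∀ (S T : Finset (Fin n)) (h : (T \ S).Nonempty),
      f S - f (S ∪ T) ≤
        ((T \ S).card : ℝ) * (T \ S).sup' h (fun i => f S - f (S ∪ {i})) := by
  intro S T h
  have hdisj : Disjoint (T \ S) S := Finset.sdiff_disjoint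
  have hST : S ∪ T = S ∪ (T \ S) := by
    ext x
    simp only [Finset.mem_union, Finset.mem_sdiff]
    tauto
  have h1 : f S - f (S ∪ T) ≤ ∑ i ∈ T \ S, (f S - f (S ∪ {i})) := by
    rw [hST]; exact supermodular_sum_bound f hsup S (T \ S) hdisj
  have h2 : ∑ i ∈ T \ S, (f S - f (S ∪ {i})) ≤
      ((T \ S).card : ℝ) * (T \ S).sup' h (fun i => f S - f (S ∪ {i})) := by
    calc ∑ i ∈ T \ S, (f S - f (S ∪ {i}))
        ≤ ∑ _i ∈ T \ S, (T \ S).sup' h (fun i => f S - f (S ∪ {i})) :=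
          Finset.sum_le_sum fun i hi =>
            Finset.le_sup' (fun i => f S - f (S ∪ {i})) hi
      _ = _ := by rw [Finset.sum_const, nsmul_eq_mul]
  linarith
end

section
/- Let f : Finset (Fin n) → ℝ be weakly-α-supermodular with α ≥ 1, let k ≥ 1 be a natural number, and let S* ⊆ Fin n with |S*| ≤ k. Let S ⊆ Fin n be arbitrary and let i* ∈ Fin n minimize f(S ∪ {i}) over all i ∈ Fin n. Then f(S ∪ {i*}) - f(S*) ≤ (1 - 1/(αk)) · (f(S) - f(S*)). -/
/-- A set function `f` is weakly-`α`-supermodular if it is nonnegative, nonincreasing,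
and for all `S T` with `T \ S` nonempty,
`f S - f (S ∪ T) ≤ α * |T \ S| * max_{i ∈ T \ S} (f S - f (S ∪ {i}))`. -/
def WeaklySupermodular {n : ℕ} (α : ℝ) (f : Finset (Fin n) → ℝ) : Prop :=
  (∀ S : Finset (Fin n), 0 ≤ f S) ∧
  (∀ S T : Finset (Fin n), S ⊆ T → f T ≤ f S) ∧
  (∀ (S T : Finset (Fin n)) (h : (T \ S).Nonempty),
    f S - f (S ∪ T) ≤
      α * ((T \ S).card : ℝ) * (T \ S).sup' h (fun i => f S - f (S ∪ {i})))

/-- A single greedy step reduces the gap to the optimal value by a factor `1 - 1/(αk)`. -/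
theorem greedy_step_progress
    (n : ℕ) (α : ℝ) (hα : 1 ≤ α) (f : Finset (Fin n) → ℝ)
    (hf : WeaklySupermodular α f)
    (k : ℕ) (hk : 1 ≤ k)
    (Sstar : Finset (Fin n)) (hSstar : Sstar.card ≤ k)
    (S : Finset (Fin n)) (istar : Fin n)
    (hmin : ∀ i : Fin n, f (S ∪ {istar}) ≤ f (S ∪ {i})) :
    f (S ∪ {istar}) - f Sstar ≤ (1 - 1 / (α * k)) * (f S - f Sstar) := by
  obtain ⟨hpos, hmono, hsup⟩ := hf
  have hk1 : (1:ℝ) ≤ (k:ℝ) := by exact_mod_cast hk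
  have hc1 : (1:ℝ) ≤ α * k := by nlinarith
  have hc0 : (0:ℝ) < α * k := by linarith
  have hcinv : (α * k) * (1 / (α * k)) = 1 := by field_simp
  have hg0 : 0 ≤ f S - f (S ∪ {istar}) := by
    have := hmono S (S ∪ {istar}) (Finset.subset_union_left)
    linarith
  -- key : f S - f Sstar ≤ α * k * (f S - f (S ∪ {istar}))
  have key : f S - f Sstar ≤ α * k * (f S - f (S ∪ {istar})) := by
    by_cases hne : (Sstar \ S).Nonempty
    · have h1 := hsup S Sstar hne
      have h2 : (Sstar \ S).sup' hne (fun i => f S - f (S ∪ {i})) ≤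
          f S - f (S ∪ {istar}) := by
        apply Finset.sup'_le
        intro i _
        have := hmin i
        linarith
      have hm : ((Sstar \ S).card : ℝ) ≤ (k:ℝ) := by
        have h := Finset.card_le_card (Finset.sdiff_subset : Sstar \ S ⊆ Sstar)
        exact_mod_cast le_trans h hSstar
      have hm0 : (0:ℝ) ≤ ((Sstar \ S).card : ℝ) := Nat.cast_nonneg _
      have h3 : f (S ∪ Sstar) ≤ f Sstar :=
        hmono Sstar (S ∪ Sstar) (Finset.subset_union_right)
      have hα0 : (0:ℝ) ≤ α := by linarith
      nlinarith [mul_le_mul_of_nonneg_left h2 (mul_nonneg hα0 hm0),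
        mul_le_mul_of_nonneg_right (mul_le_mul_of_nonneg_left hm hα0) hg0]
    · have hsub : Sstar ⊆ S := by
        rw [Finset.not_nonempty_iff_eq_empty, Finset.sdiff_eq_empty_iff_subset] at hne
        exact hne
      have := hmono Sstar S hsub
      nlinarith
  have hinv0 : (0:ℝ) < 1 / (α * k) := by positivity
  have hdiv : (f S - f Sstar) * (1 / (α * k)) ≤ f S - f (S ∪ {istar}) := by
    nlinarith [mul_le_mul_of_nonneg_right key (le_of_lt hinv0), hcinv]
  nlinarith [hdiv]
end

section
/- Let f : Finset (Fin n) → ℝ be weakly-α-supermodular with α ≥ 1, let k ≥ 1 be a natural number, and let S* ⊆ Fin n with |S*| ≤ k. Let S : ℕ → Finset (Fin n) be a greedy extension sequence for f starting from some S₀. Then for every t ∈ ℕ, f(S t) - f(S*) ≤ (f(S₀) - f(S*)) · (1 - 1/(αk))^t. -/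
/-- `S` is a greedy extension sequence for `f` starting from `S₀`: `S 0 = S₀` and each step
adds an element minimizing `f (S t ∪ {i})` over all `i`. -/
def GreedySeq {n : ℕ} (f : Finset (Fin n) → ℝ) (S₀ : Finset (Fin n))
    (S : ℕ → Finset (Fin n)) : Prop :=
  S 0 = S₀ ∧
  ∀ t : ℕ, ∃ i : Fin n,
    S (t + 1) = S t ∪ {i} ∧ ∀ j : Fin n, f (S t ∪ {i}) ≤ f (S t ∪ {j})

/-- After `t` greedy steps the gap to the optimum shrinks by a factor `(1 - 1/(αk))^t`. -/
theorem greedy_geometric_decay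
    (n : ℕ) (α : ℝ) (hα : 1 ≤ α) (f : Finset (Fin n) → ℝ)
    (hf : WeaklySupermodular α f)
    (k : ℕ) (hk : 1 ≤ k)
    (Sstar : Finset (Fin n)) (hSstar : Sstar.card ≤ k)
    (S₀ : Finset (Fin n)) (S : ℕ → Finset (Fin n))
    (hS : GreedySeq f S₀ S) :
    ∀ t : ℕ, f (S t) - f Sstar ≤ (f S₀ - f Sstar) * (1 - 1 / (α * k)) ^ t := by

  have hk1 : (1:ℝ) ≤ (k:ℝ) := by exact_mod_cast hk
  have hx1 : (1:ℝ) ≤ α * k := by nlinarith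
  have hx0 : (0:ℝ) < α * k := by linarith
  have hc0 : (0:ℝ) ≤ 1 - 1 / (α * k) := by
    have : 1 / (α * k) ≤ 1 := by
      rw [div_le_one hx0]; linarith
    linarith
  -- one-step inequality
  have step : ∀ t : ℕ, f (S (t+1)) - f Sstar ≤ (f (S t) - f Sstar) * (1 - 1 / (α * k)) := by
    intro t
    obtain ⟨i, hSi, hmin⟩ := hS.2 t
    have hmono := hf.2.1
    have hstep0 : f (S (t+1)) ≤ f (S t) := by
      rw [hSi]; exact hmono _ _ Finset.subset_union_left
    rcases lt_or_ge (f (S t) - f Sstar) 0 with hg | hg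
    · have h1 : (0:ℝ) < 1 / (α * k) := by positivity
      nlinarith
    · by_cases hne : (Sstar \ S t).Nonempty
      · have hsm := hf.2.2 (S t) Sstar hne
        obtain ⟨i₀, hi₀mem, hi₀⟩ := Finset.exists_mem_eq_sup' hne (fun i => f (S t) - f (S t ∪ {i}))
        set M := f (S t) - f (S t ∪ {i₀}) with hM
        have hsup : (Sstar \ S t).sup' hne (fun i => f (S t) - f (S t ∪ {i})) = M := by
          rw [hi₀]
        rw [hsup] at hsm
        have hM0 : 0 ≤ M := by
          have := hmono (S t) (S t ∪ {i₀}) Finset.subset_union_left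
          linarith
        have hm1 : (1:ℝ) ≤ ((Sstar \ S t).card : ℝ) := by
          exact_mod_cast Finset.one_le_card.mpr hne
        have hmk : ((Sstar \ S t).card : ℝ) ≤ (k:ℝ) := by
          exact_mod_cast le_trans (Finset.card_le_card (Finset.sdiff_subset)) hSstar
        have hopt : f (S t ∪ Sstar) ≤ f Sstar :=
          hmono _ _ Finset.subset_union_right
        have hg2 : f (S t) - f Sstar ≤ α * k * M := by
          nlinarith
        have hgreedy : f (S (t+1)) ≤ f (S t ∪ {i₀}) := by
          rw [hSi]; exact hmin i₀
        have hMx : (f (S t) - f Sstar) / (α * k) ≤ M := by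
          rw [div_le_iff₀ hx0]; linarith
        have hrw : (f (S t) - f Sstar) * (1 - 1 / (α * k))
            = (f (S t) - f Sstar) - (f (S t) - f Sstar) / (α * k) := by
          field_simp
        rw [hrw]
        linarith
      · have hsub : Sstar ⊆ S t := by
          rw [Finset.not_nonempty_iff_eq_empty, Finset.sdiff_eq_empty_iff_subset] at hne
          exact hne
        have := hmono Sstar (S t) hsub
        nlinarith
  intro t
  induction t with
  | zero => simp [hS.1]
  | succ t ih =>
      calc f (S (t+1)) - f Sstar ≤ (f (S t) - f Sstar) * (1 - 1 / (α * k)) := step t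
        _ ≤ (f S₀ - f Sstar) * (1 - 1 / (α * k)) ^ t * (1 - 1 / (α * k)) :=
            mul_le_mul_of_nonneg_right ih hc0
        _ = (f S₀ - f Sstar) * (1 - 1 / (α * k)) ^ (t+1) := by ring
end

section
/- Let f : Finset (Fin n) → ℝ be weakly-α-supermodular with α ≥ 1, let k ≥ 1 be a natural number, let S* ⊆ Fin n with |S*| ≤ k, let E be a real with 0 < E ≤ f(S₀), and let S : ℕ → Finset (Fin n) be a greedy extension sequence for f starting from S₀. Set τ = ⌈α·k·ln(f(S₀)/E)⌉. Then |S τ| ≤ |S₀| + τ and f(S τ) ≤ f(S*) + E. -/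
/-- Main guarantee of the greedy extension algorithm: after `τ = ⌈α k ln(f S₀ / E)⌉`
steps, the solution has at most `|S₀| + τ` elements and value at most `f S* + E`. -/
theorem greedy_extension_guarantee
    (n : ℕ) (α : ℝ) (hα : 1 ≤ α) (f : Finset (Fin n) → ℝ)
    (hf : WeaklySupermodular α f)
    (k : ℕ) (hk : 1 ≤ k)
    (Sstar : Finset (Fin n)) (hSstar : Sstar.card ≤ k)
    (S₀ : Finset (Fin n)) (E : ℝ) (hE : 0 < E) (hE' : E ≤ f S₀)
    (S : ℕ → Finset (Fin n)) (hS : GreedySeq f S₀ S)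
    (τ : ℕ) (hτ : τ = ⌈α * (k : ℝ) * Real.log (f S₀ / E)⌉₊) :
    (S τ).card ≤ S₀.card + τ ∧ f (S τ) ≤ f Sstar + E := by
  obtain ⟨hf0, hmono, hsubm⟩ := hf
  obtain ⟨hS0, hstep⟩ := hS
  have hcard : ∀ t, (S t).card ≤ S₀.card + t := by
    intro t
    induction t with
    | zero => simp [hS0]
    | succ t ih =>
      obtain ⟨i, hi, _⟩ := hstep t
      rw [hi]
      have := Finset.card_union_le (S t) {i}
      simp only [Finset.card_singleton] at this
      omega
  refine ⟨hcard τ, ?_⟩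
  have hk1 : (1:ℝ) ≤ (k:ℝ) := by exact_mod_cast hk
  have hαk : (1:ℝ) ≤ α * k := by nlinarith
  have hαkpos : (0:ℝ) < α * k := lt_of_lt_of_le one_pos hαk
  set r : ℝ := 1 - 1/(α*k) with hr
  have hr0 : 0 ≤ r := by
    have h1 : 1/(α*k) ≤ 1 := by rw [div_le_one hαkpos]; exact hαk
    simp only [hr]; linarith
  have hre : r ≤ Real.exp (-(1/(α*k))) := by
    have := Real.add_one_le_exp (-(1/(α*k)))
    simp only [hr]; linarith
  set D : ℕ → ℝ := fun t => max (f (S t) - f Sstar) 0 with hD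
  have hDstep : ∀ t, D (t+1) ≤ r * D t := by
    intro t
    obtain ⟨i, hi, hmin⟩ := hstep t
    have hmonot : f (S (t+1)) ≤ f (S t) := by
      apply hmono; rw [hi]; exact Finset.subset_union_left
    by_cases hpos : f Sstar < f (S t)
    · have hne : (Sstar \ S t).Nonempty := by
        rw [Finset.sdiff_nonempty]
        intro hsub'
        exact absurd (hmono _ _ hsub') (not_le.mpr hpos)
      have hkey := hsubm (S t) Sstar hne
      have hub : f (S t) - f Sstar ≤ f (S t) - f (S t ∪ Sstar) := by
        have := hmono Sstar (S t ∪ Sstar) Finset.subset_union_right; linarith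
      set M := (Sstar \ S t).sup' hne (fun i => f (S t) - f (S t ∪ {i})) with hM
      have hcard' : ((Sstar \ S t).card : ℝ) ≤ (k:ℝ) := by
        have : (Sstar \ S t).card ≤ k :=
          le_trans (Finset.card_le_card Finset.sdiff_subset) hSstar
        exact_mod_cast this
      have hcnn : (0:ℝ) ≤ ((Sstar \ S t).card : ℝ) := Nat.cast_nonneg _
      have hMpos : 0 < M := by
        by_contra h
        push_neg at h
        have : α * ((Sstar \ S t).card : ℝ) * M ≤ 0 :=
          mul_nonpos_of_nonneg_of_nonpos (by positivity) h
        linarith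
      have h1 : f (S t) - f Sstar ≤ α * k * M := by
        calc f (S t) - f Sstar ≤ α * ((Sstar \ S t).card : ℝ) * M := le_trans hub hkey
          _ ≤ α * k * M := by
            apply mul_le_mul_of_nonneg_right _ hMpos.le
            apply mul_le_mul_of_nonneg_left hcard' (by linarith)
      obtain ⟨j, hj, hjM⟩ := Finset.exists_mem_eq_sup' hne (fun i => f (S t) - f (S t ∪ {i}))
      have h2 : M ≤ f (S t) - f (S (t+1)) := by
        rw [hM, hjM, hi]
        have := hmin j
        linarith
      have hMge : (f (S t) - f Sstar) / (α * k) ≤ M := by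
        rw [div_le_iff₀ hαkpos]; linarith [h1]
      have h3 : f (S (t+1)) - f Sstar ≤ r * (f (S t) - f Sstar) := by
        have : f (S (t+1)) - f Sstar ≤ (f (S t) - f Sstar) - (f (S t) - f Sstar)/(α*k) := by
          linarith
        have heq : (f (S t) - f Sstar) - (f (S t) - f Sstar)/(α*k)
            = r * (f (S t) - f Sstar) := by
          simp only [hr]; ring
        linarith [heq ▸ this]
      have hrΔ : 0 ≤ r * (f (S t) - f Sstar) := mul_nonneg hr0 (by linarith)
      simp only [hD]
      have heqm : (f (S t) - f Sstar) ⊔ 0 = f (S t) - f Sstar := max_eq_left (by linarith)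
      rw [heqm]
      exact max_le h3 hrΔ
    · push_neg at hpos
      have : D (t+1) = 0 := max_eq_right (by linarith)
      rw [this]
      exact mul_nonneg hr0 (le_max_right _ _)
  have hDbound : ∀ t, D t ≤ f S₀ * r ^ t := by
    intro t
    induction t with
    | zero =>
      simp only [hD, pow_zero, mul_one, hS0]
      exact max_le (by linarith [hf0 Sstar]) (by linarith)
    | succ t ih =>
      calc D (t+1) ≤ r * D t := hDstep t
        _ ≤ r * (f S₀ * r ^ t) := mul_le_mul_of_nonneg_left ih hr0
        _ = f S₀ * r ^ (t+1) := by ring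
  have hfS0pos : 0 < f S₀ := lt_of_lt_of_le hE hE'
  have hτge : α * k * Real.log (f S₀ / E) ≤ (τ : ℝ) := by
    rw [hτ]; exact Nat.le_ceil _
  have hrpow : r ^ τ ≤ E / f S₀ := by
    have h1 : r ^ τ ≤ Real.exp (-(1/(α*k))) ^ τ := pow_le_pow_left₀ hr0 hre τ
    have h2 : Real.exp (-(1/(α*k))) ^ τ = Real.exp ((τ:ℝ) * -(1/(α*k))) := by
      rw [← Real.exp_nat_mul]
    have h3 : Real.exp ((τ:ℝ) * -(1/(α*k))) ≤ E / f S₀ := by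
      have hEf : (0:ℝ) < E / f S₀ := div_pos hE hfS0pos
      rw [← Real.exp_log hEf, Real.exp_le_exp]
      have hlog : Real.log (E / f S₀) = - Real.log (f S₀ / E) := by
        rw [← Real.log_inv, inv_div]
      rw [hlog]
      have : Real.log (f S₀ / E) ≤ (τ:ℝ) / (α * k) := by
        rw [le_div_iff₀ hαkpos]
        calc Real.log (f S₀ / E) * (α * k) = α * k * Real.log (f S₀ / E) := by ring
          _ ≤ (τ:ℝ) := hτge
      have : -((τ:ℝ)/(α*k)) ≤ - Real.log (f S₀ / E) := by linarith
      calc (τ:ℝ) * -(1/(α*k)) = -((τ:ℝ)/(α*k)) := by ring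
        _ ≤ - Real.log (f S₀ / E) := this
    calc r ^ τ ≤ Real.exp (-(1/(α*k))) ^ τ := h1
      _ = Real.exp ((τ:ℝ) * -(1/(α*k))) := h2
      _ ≤ E / f S₀ := h3
  have hfinal : D τ ≤ E := by
    calc D τ ≤ f S₀ * r ^ τ := hDbound τ
      _ ≤ f S₀ * (E / f S₀) := mul_le_mul_of_nonneg_left hrpow hfS0pos.le
      _ = E := by field_simp
  have : f (S τ) - f Sstar ≤ D τ := le_max_left _ _
  linarith
end

section
/- Let f : Finset (Fin n) → ℝ be weakly-α-supermodular with α ≥ 1, let k ≥ 1 be a natural number, and let S* ⊆ Fin n with |S*| ≤ k and f(S*) > 0. Let ρ ≥ 1 and ε > 0 with ε ≤ ρ, and suppose S₀ ⊆ Fin n satisfies f(S₀) ≤ ρ · f(S*). Then there exists S ⊆ Fin n with S₀ ⊆ S, |S| ≤ |S₀| + ⌈α·k·ln(ρ/ε)⌉, and f(S) ≤ (1 + ε) · f(S*). -/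
/-- Starting from a `ρ`-approximate solution `S₀`, a greedy extension of size at most
`|S₀| + ⌈α k ln(ρ/ε)⌉` is a `(1+ε)`-approximation. -/
theorem greedy_extension_multiplicative
    (n : ℕ) (α : ℝ) (hα : 1 ≤ α) (f : Finset (Fin n) → ℝ)
    (hf : WeaklySupermodular α f)
    (k : ℕ) (hk : 1 ≤ k)
    (Sstar : Finset (Fin n)) (hSstar : Sstar.card ≤ k) (hpos : 0 < f Sstar)
    (ρ ε : ℝ) (hρ : 1 ≤ ρ) (hε : 0 < ε) (hερ : ε ≤ ρ)
    (S₀ : Finset (Fin n)) (hS₀ : f S₀ ≤ ρ * f Sstar) :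
    ∃ S : Finset (Fin n), S₀ ⊆ S ∧
      S.card ≤ S₀.card + ⌈α * (k : ℝ) * Real.log (ρ / ε)⌉₊ ∧
      f S ≤ (1 + ε) * f Sstar := by
  obtain ⟨hf0, hmono, hsup⟩ := hf
  have hk1 : (1:ℝ) ≤ (k:ℝ) := by exact_mod_cast hk
  have hαk : (1:ℝ) ≤ α * k := by nlinarith
  have hαkpos : (0:ℝ) < α * k := by linarith
  set β : ℝ := 1 / (α * k) with hβ
  have hβpos : 0 < β := by positivity
  have hβle : β ≤ 1 := by rw [hβ, div_le_one hαkpos]; linarith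
  have h1β : (0:ℝ) ≤ 1 - β := by linarith
  have hβαk : β * (α * k) = 1 := one_div_mul_cancel (ne_of_gt hαkpos)
  set M : ℝ := max 0 (f S₀ - f Sstar) with hM
  have hMnn : 0 ≤ M := le_max_left _ _
  have main : ∀ m : ℕ, ∃ S, S₀ ⊆ S ∧ S.card ≤ S₀.card + m ∧
      f S - f Sstar ≤ (1 - β) ^ m * M := by
    intro m
    induction m with
    | zero =>
      refine ⟨S₀, subset_rfl, by simp, ?_⟩
      rw [pow_zero, one_mul]
      exact le_max_right _ _
    | succ m ih =>
      obtain ⟨S, hsub, hcard, hle⟩ := ih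
      by_cases hfs : f S ≤ f Sstar
      · refine ⟨S, hsub, hcard.trans (by omega), ?_⟩
        have : (0:ℝ) ≤ (1 - β) ^ (m + 1) * M :=
          mul_nonneg (pow_nonneg h1β _) hMnn
        linarith
      · push_neg at hfs
        have hne : (Sstar \ S).Nonempty := by
          rw [Finset.sdiff_nonempty]
          intro hss
          exact absurd (hmono _ _ hss) (not_le.mpr hfs)
        obtain ⟨i, hi, hieq⟩ := Finset.exists_mem_eq_sup' hne (fun i => f S - f (S ∪ {i}))
        have h1 := hsup S Sstar hne
        rw [hieq] at h1
        set X : ℝ := f S - f (S ∪ {i}) with hX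
        have hc : ((Sstar \ S).card : ℝ) ≤ (k:ℝ) := by
          exact_mod_cast (Finset.card_le_card (Finset.sdiff_subset)).trans hSstar
        have hcpos : (0:ℝ) < ((Sstar \ S).card : ℝ) := by
          exact_mod_cast Finset.card_pos.mpr hne
        have hfSS : f (S ∪ Sstar) ≤ f Sstar := hmono _ _ Finset.subset_union_right
        have hD : 0 < f S - f Sstar := by linarith
        have hXpos : 0 < X := by
          by_contra h
          push_neg at h
          have hαc : (0:ℝ) < α * ((Sstar \ S).card : ℝ) := mul_pos (by linarith) hcpos
          have : α * ((Sstar \ S).card : ℝ) * X ≤ 0 := mul_nonpos_of_nonneg_of_nonpos hαc.le h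
          linarith
        have key : f S - f Sstar ≤ α * k * X := by
          have h2 : α * ((Sstar \ S).card : ℝ) ≤ α * k :=
            mul_le_mul_of_nonneg_left hc (by linarith)
          have h3 : α * ((Sstar \ S).card : ℝ) * X ≤ α * k * X :=
            mul_le_mul_of_nonneg_right h2 hXpos.le
          linarith
        have hXβ : β * (f S - f Sstar) ≤ X := by
          have := mul_le_mul_of_nonneg_left key hβpos.le
          calc β * (f S - f Sstar) ≤ β * (α * k * X) := this
            _ = (β * (α * k)) * X := by ring
            _ = X := by rw [hβαk, one_mul]
        refine ⟨S ∪ {i}, hsub.trans Finset.subset_union_left, ?_, ?_⟩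
        · have : (S ∪ {i}).card ≤ S.card + 1 := by
            simpa using Finset.card_union_le S {i}
          omega
        · have hstep : f (S ∪ {i}) - f Sstar ≤ (1 - β) * (f S - f Sstar) := by
            have : f (S ∪ {i}) = f S - X := by rw [hX]; ring
            rw [this]; nlinarith
          calc f (S ∪ {i}) - f Sstar ≤ (1 - β) * (f S - f Sstar) := hstep
            _ ≤ (1 - β) * ((1 - β) ^ m * M) := mul_le_mul_of_nonneg_left hle h1β
            _ = (1 - β) ^ (m + 1) * M := by ring
  obtain ⟨S, hs1, hs2, hs3⟩ := main ⌈α * (k : ℝ) * Real.log (ρ / ε)⌉₊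
  refine ⟨S, hs1, hs2, ?_⟩
  set m : ℕ := ⌈α * (k : ℝ) * Real.log (ρ / ε)⌉₊ with hm
  set L : ℝ := Real.log (ρ / ε) with hL
  have hρ0 : (0:ℝ) < ρ := by linarith
  have hρε : (0:ℝ) < ρ / ε := div_pos hρ0 hε
  have hml : α * k * L ≤ (m : ℝ) := Nat.le_ceil _
  have hexp1 : (1 - β) ^ m ≤ Real.exp (-β) ^ m := by
    apply pow_le_pow_left₀ h1β
    linarith [Real.add_one_le_exp (-β)]
  have hexp2 : Real.exp (-β) ^ m = Real.exp (-(β * m)) := by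
    rw [← Real.exp_nat_mul]; ring_nf
  have hβm : L ≤ β * m := by
    have := mul_le_mul_of_nonneg_left hml hβpos.le
    calc L = β * (α * k * L) := by rw [hβ]; field_simp
      _ ≤ β * m := this
  have hexp3 : Real.exp (-(β * m)) ≤ Real.exp (-L) := by
    apply Real.exp_le_exp.mpr; linarith
  have hexpL : Real.exp (-L) = ε / ρ := by
    rw [hL, Real.exp_neg, Real.exp_log hρε]
    rw [inv_div]
  have hpow : (1 - β) ^ m ≤ ε / ρ := by
    calc (1 - β) ^ m ≤ Real.exp (-β) ^ m := hexp1
      _ = Real.exp (-(β * m)) := hexp2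
      _ ≤ Real.exp (-L) := hexp3
      _ = ε / ρ := by rw [hexpL]
  have hMρ : M ≤ ρ * f Sstar := by
    rw [hM]
    apply max_le
    · exact mul_nonneg (by linarith) hpos.le
    · nlinarith
  have hfin : (1 - β) ^ m * M ≤ (ε / ρ) * (ρ * f Sstar) := by
    apply mul_le_mul hpow hMρ hMnn
    exact (div_pos hε hρ0).le
  have : (ε / ρ) * (ρ * f Sstar) = ε * f Sstar := by
    rw [div_mul_eq_mul_div, mul_comm ρ (f Sstar), ← mul_assoc, mul_div_assoc,
      div_self hρ0.ne', mul_one]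
  rw [this] at hfin
  nlinarith
end

section
/- Let f : Finset (Fin n) → ℝ be weakly-α-supermodular with α ≥ 1, let φ ≥ 0 and φ_stop be reals with φ < φ_stop ≤ f(S₀) for a given S₀ ⊆ Fin n, and suppose there exists a set S' of cardinality k_f ≥ 1 with f(S') ≤ φ. Then there exists S ⊆ Fin n with S₀ ⊆ S, |S| ≤ |S₀| + ⌈α · k_f · ln( f(S₀) / (φ_stop - φ) )⌉, and f(S) ≤ φ_stop. -/
/-- Greedy extension with an alternative stopping criterion: if some set of cardinality
`k_f` achieves value at most `φ < φ_stop`, then a greedy extension of `S₀` with at most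
`⌈α k_f ln(f S₀ / (φ_stop - φ))⌉` extra elements achieves value at most `φ_stop`. -/
theorem greedy_extension_stopping_criterion
    (n : ℕ) (α : ℝ) (hα : 1 ≤ α) (f : Finset (Fin n) → ℝ)
    (hf : WeaklySupermodular α f)
    (φ φstop : ℝ) (hφ : 0 ≤ φ)
    (S₀ : Finset (Fin n)) (hlt : φ < φstop) (hstop : φstop ≤ f S₀)
    (kf : ℕ) (hkf : 1 ≤ kf)
    (hex : ∃ S' : Finset (Fin n), S'.card = kf ∧ f S' ≤ φ) :
    ∃ S : Finset (Fin n), S₀ ⊆ S ∧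
      S.card ≤ S₀.card + ⌈α * (kf : ℝ) * Real.log (f S₀ / (φstop - φ))⌉₊ ∧
      f S ≤ φstop := by
  obtain ⟨hnn, hmono, hsup⟩ := hf
  obtain ⟨S', hS'card, hS'φ⟩ := hex
  obtain ⟨c, hc⟩ : ∃ c : ℝ, c = α * (kf : ℝ) := ⟨_, rfl⟩
  have hkf1 : (1:ℝ) ≤ (kf:ℝ) := by exact_mod_cast hkf
  have hc1 : 1 ≤ c := by rw [hc]; nlinarith
  have hcpos : 0 < c := lt_of_lt_of_le one_pos hc1
  obtain ⟨r, hr⟩ : ∃ r : ℝ, r = 1 - 1/c := ⟨_, rfl⟩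
  have hr0 : 0 ≤ r := by
    have : 1/c ≤ 1 := by rw [div_le_one hcpos]; exact hc1
    rw [hr]; linarith
  -- the greedy step
  have step : ∀ S : Finset (Fin n), φstop < f S →
      ∃ i, f (S ∪ {i}) - φ ≤ r * (f S - φ) := by
    intro S hfs
    have hne : (S' \ S).Nonempty := by
      by_contra h
      rw [Finset.not_nonempty_iff_eq_empty, Finset.sdiff_eq_empty_iff_subset] at h
      have := hmono S' S h
      linarith
    have hkey := hsup S S' hne
    have hφS : f (S ∪ S') ≤ φ :=
      le_trans (hmono S' (S ∪ S') Finset.subset_union_right) hS'φ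
    set M := (S' \ S).sup' hne (fun i => f S - f (S ∪ {i})) with hM
    have h1 : f S - φ ≤ α * ((S' \ S).card : ℝ) * M := by linarith
    have hcard' : ((S' \ S).card : ℝ) ≤ (kf:ℝ) := by
      exact_mod_cast le_trans (Finset.card_le_card Finset.sdiff_subset) hS'card.le
    have hcardpos : 0 < ((S' \ S).card : ℝ) := by
      exact_mod_cast Finset.card_pos.mpr hne
    have hMpos : 0 < M := by
      by_contra hcon
      push_neg at hcon
      have : α * ((S' \ S).card : ℝ) * M ≤ 0 :=
        mul_nonpos_of_nonneg_of_nonpos (mul_nonneg (by linarith) hcardpos.le) hcon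
      linarith
    have h2 : f S - φ ≤ c * M := by
      rw [hc]
      have hint := mul_le_mul_of_nonneg_right hcard'
        (mul_nonneg (by linarith : (0:ℝ) ≤ α) hMpos.le)
      nlinarith [h1, hint]
    obtain ⟨i, _, hMi⟩ := Finset.exists_mem_eq_sup' hne (fun i => f S - f (S ∪ {i}))
    refine ⟨i, ?_⟩
    have hdiv : (f S - φ)/c ≤ M := by
      rw [div_le_iff₀ hcpos]; nlinarith
    have hgoal : f (S ∪ {i}) ≤ f S - (f S - φ)/c := by
      have : M = f S - f (S ∪ {i}) := hMi
      linarith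
    have hring : r * (f S - φ) = (f S - φ) - (f S - φ)/c := by
      rw [hr]; ring
    linarith
  -- main induction
  have main : ∀ t : ℕ, ∃ S : Finset (Fin n), S₀ ⊆ S ∧ S.card ≤ S₀.card + t ∧
      (f S ≤ φstop ∨ f S - φ ≤ r^t * (f S₀ - φ)) := by
    intro t
    induction t with
    | zero => exact ⟨S₀, subset_rfl, by simp, Or.inr (by simp)⟩
    | succ t ih =>
      obtain ⟨S, hsub, hcard, hcase⟩ := ih
      by_cases hfs : f S ≤ φstop
      · exact ⟨S, hsub, le_trans hcard (by omega), Or.inl hfs⟩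
      · push_neg at hfs
        obtain ⟨i, hstep⟩ := step S hfs
        refine ⟨S ∪ {i}, hsub.trans Finset.subset_union_left, ?_, Or.inr ?_⟩
        · have := Finset.card_union_le S {i}
          simp only [Finset.card_singleton] at this
          omega
        · rcases hcase with h | h
          · linarith
          · calc f (S ∪ {i}) - φ ≤ r * (f S - φ) := hstep
              _ ≤ r * (r^t * (f S₀ - φ)) := mul_le_mul_of_nonneg_left h hr0
              _ = r^(t+1) * (f S₀ - φ) := by ring
  obtain ⟨N, hN⟩ : ∃ N : ℕ, N = ⌈α * (kf : ℝ) * Real.log (f S₀ / (φstop - φ))⌉₊ := ⟨_, rfl⟩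
  obtain ⟨S, hsub, hcard, hcase⟩ := main N
  refine ⟨S, hsub, by rw [hN] at hcard; exact hcard, ?_⟩
  rcases hcase with h | h
  · exact h
  · have hfS₀pos : 0 < f S₀ := lt_of_lt_of_le (lt_of_le_of_lt hφ hlt) hstop
    have hφφ : 0 < φstop - φ := by linarith
    have hNge : c * Real.log (f S₀ / (φstop - φ)) ≤ (N:ℝ) := by
      rw [hc, hN]; exact Nat.le_ceil _
    have hexp : Real.exp (-((N:ℝ)/c)) * f S₀ ≤ φstop - φ := by
      have hlog : Real.log (f S₀ / (φstop - φ)) ≤ (N:ℝ)/c := by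
        rw [le_div_iff₀ hcpos]
        nlinarith
      have hlog2 : Real.log (f S₀) - Real.log (φstop - φ) ≤ (N:ℝ)/c := by
        rwa [Real.log_div (ne_of_gt hfS₀pos) (ne_of_gt hφφ)] at hlog
      have h2 : Real.exp (-((N:ℝ)/c)) ≤ (φstop - φ)/ f S₀ := by
        rw [← Real.exp_log (by positivity : 0 < (φstop - φ)/f S₀)]
        apply Real.exp_le_exp.mpr
        rw [Real.log_div (ne_of_gt hφφ) (ne_of_gt hfS₀pos)]
        linarith
      calc Real.exp (-((N:ℝ)/c)) * f S₀ ≤ ((φstop - φ)/f S₀) * f S₀ :=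
            mul_le_mul_of_nonneg_right h2 hfS₀pos.le
        _ = φstop - φ := by field_simp
    have hrle : r ≤ Real.exp (-(1/c)) := by
      have := Real.add_one_le_exp (-(1/c))
      rw [hr]; linarith
    have hpow : r^N ≤ Real.exp (-((N:ℝ)/c)) := by
      calc r^N ≤ (Real.exp (-(1/c)))^N := pow_le_pow_left₀ hr0 hrle N
        _ = Real.exp (-((N:ℝ)/c)) := by
            rw [← Real.exp_nat_mul]; congr 1; field_simp
    have hfinal : f S - φ ≤ Real.exp (-((N:ℝ)/c)) * f S₀ := by
      calc f S - φ ≤ r^N * (f S₀ - φ) := h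
        _ ≤ Real.exp (-((N:ℝ)/c)) * (f S₀ - φ) :=
            mul_le_mul_of_nonneg_right hpow (by linarith)
        _ ≤ Real.exp (-((N:ℝ)/c)) * f S₀ :=
            mul_le_mul_of_nonneg_left (by linarith) (Real.exp_pos _).le
    linarith
end

section
/- Let X be a finite set of points in ℝ^d (formally, x : Fin n → EuclideanSpace ℝ (Fin d)). For nonempty S ⊆ Fin n define the constrained k-means objective f(S) = Σ_{i ∈ Fin n} min_{j ∈ S} ‖x i - x j‖². Then f satisfies the weak-1-supermodularity inequality: for all nonempty S ⊆ Fin n and all T ⊆ Fin n with T \ S nonempty, f(S) - f(S ∪ T) ≤ |T \ S| · max_{i ∈ T \ S} (f(S) - f(S ∪ {i})). -/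
/-- The constrained `k`-means objective `f S = Σ_i min_{j ∈ S} ‖x i - x j‖²` is
weakly-1-supermodular: for nonempty `S` and `T \ S`,
`f S - f (S ∪ T) ≤ |T \ S| * max_{i ∈ T \ S} (f S - f (S ∪ {i}))`. -/
theorem kMeans_weakly_one_supermodular
    (n d : ℕ) (x : Fin n → EuclideanSpace ℝ (Fin d))
    (f : Finset (Fin n) → ℝ)
    (hf : ∀ (S : Finset (Fin n)) (hS : S.Nonempty),
      f S = ∑ i : Fin n, S.inf' hS (fun j => ‖x i - x j‖ ^ 2))
    (S T : Finset (Fin n)) (hS : S.Nonempty) (hTS : (T \ S).Nonempty) :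
    f S - f (S ∪ T) ≤
      ((T \ S).card : ℝ) * (T \ S).sup' hTS (fun i => f S - f (S ∪ {i})) := by
  classical
  have hSUT : (S ∪ T).Nonempty := hS.mono Finset.subset_union_left
  have hSj : ∀ j : Fin n, (S ∪ {j}).Nonempty := fun j => hS.mono Finset.subset_union_left
  have hST : S ∪ T = S ∪ (T \ S) := by
    ext a; simp only [Finset.mem_union, Finset.mem_sdiff]; tauto
  -- singleton union inf'
  have hunion : ∀ (i : Fin n) (j : Fin n),
      (S ∪ {j}).inf' (hSj j) (fun j' => ‖x i - x j'‖ ^ 2)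
        = min (S.inf' hS (fun j' => ‖x i - x j'‖ ^ 2)) (‖x i - x j‖ ^ 2) := by
    intro i j
    rw [Finset.inf'_union hS ⟨j, Finset.mem_singleton_self j⟩, Finset.inf'_singleton]
  have hnonneg : ∀ (i j : Fin n),
      0 ≤ S.inf' hS (fun j' => ‖x i - x j'‖ ^ 2)
          - (S ∪ {j}).inf' (hSj j) (fun j' => ‖x i - x j'‖ ^ 2) := by
    intro i j
    rw [hunion i j]
    have := min_le_left (S.inf' hS (fun j' => ‖x i - x j'‖ ^ 2)) (‖x i - x j‖ ^ 2)
    linarith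
  have key : ∀ i : Fin n,
      S.inf' hS (fun j => ‖x i - x j‖ ^ 2) - (S ∪ T).inf' hSUT (fun j => ‖x i - x j‖ ^ 2)
        ≤ ∑ j ∈ (T \ S), (S.inf' hS (fun j' => ‖x i - x j'‖ ^ 2)
            - (S ∪ {j}).inf' (hSj j) (fun j' => ‖x i - x j'‖ ^ 2)) := by
    intro i
    obtain ⟨j0, hj0, hj0eq⟩ := (T \ S).exists_mem_eq_inf' hTS (fun j => ‖x i - x j‖ ^ 2)
    have hUT : (S ∪ T).inf' hSUT (fun j => ‖x i - x j‖ ^ 2)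
        = (S ∪ {j0}).inf' (hSj j0) (fun j' => ‖x i - x j'‖ ^ 2) := by
      rw [hunion i j0]
      have : (S ∪ T).inf' hSUT (fun j => ‖x i - x j‖ ^ 2)
          = (S ∪ (T \ S)).inf' (hST ▸ hSUT) (fun j => ‖x i - x j‖ ^ 2) := by
        congr 1
      rw [this, Finset.inf'_union hS hTS, ← hj0eq]
    rw [hUT]
    exact Finset.single_le_sum (fun j _ => hnonneg i j) hj0
  calc f S - f (S ∪ T)
      = ∑ i : Fin n, (S.inf' hS (fun j => ‖x i - x j‖ ^ 2)
          - (S ∪ T).inf' hSUT (fun j => ‖x i - x j‖ ^ 2)) := by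
        rw [hf S hS, hf (S ∪ T) hSUT, Finset.sum_sub_distrib]
    _ ≤ ∑ i : Fin n, ∑ j ∈ (T \ S), (S.inf' hS (fun j' => ‖x i - x j'‖ ^ 2)
          - (S ∪ {j}).inf' (hSj j) (fun j' => ‖x i - x j'‖ ^ 2)) :=
        Finset.sum_le_sum (fun i _ => key i)
    _ = ∑ j ∈ (T \ S), (f S - f (S ∪ {j})) := by
        rw [Finset.sum_comm]
        refine Finset.sum_congr rfl (fun j _ => ?_)
        rw [hf S hS, hf (S ∪ {j}) (hSj j), Finset.sum_sub_distrib]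
    _ ≤ ∑ _j ∈ (T \ S), (T \ S).sup' hTS (fun i => f S - f (S ∪ {i})) :=
        Finset.sum_le_sum (fun j hj => Finset.le_sup' (fun i => f S - f (S ∪ {i})) hj)
    _ = ((T \ S).card : ℝ) * (T \ S).sup' hTS (fun i => f S - f (S ∪ {i})) := by
        rw [Finset.sum_const, nsmul_eq_mul]
end

section
/- Let x : Fin n → EuclideanSpace ℝ (Fin d) be a finite nonempty family of points (n ≥ 1) and let c ∈ EuclideanSpace ℝ (Fin d) be arbitrary. Then there exists an index j ∈ Fin n such that Σ_{i ∈ Fin n} ‖x i - x j‖² ≤ 2 · Σ_{i ∈ Fin n} ‖x i - c‖². -/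
open scoped RealInnerProductSpace

/-- For any finite nonempty family of points and any center `c`, some data point `x j`
serves as a center at most twice as bad as `c`:
`Σ_i ‖x i - x j‖² ≤ 2 Σ_i ‖x i - c‖²`. -/
theorem exists_center_among_points
    (n d : ℕ) (hn : 1 ≤ n) (x : Fin n → EuclideanSpace ℝ (Fin d))
    (c : EuclideanSpace ℝ (Fin d)) :
    ∃ j : Fin n, ∑ i : Fin n, ‖x i - x j‖ ^ 2 ≤ 2 * ∑ i : Fin n, ‖x i - c‖ ^ 2 := by
  set y : Fin n → EuclideanSpace ℝ (Fin d) := fun i => x i - c with hy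
  have hxy : ∀ i j : Fin n, x i - x j = y i - y j := by
    intro i j; simp [hy]
  have key : ∑ j : Fin n, ∑ i : Fin n, ‖x i - x j‖ ^ 2
      ≤ ∑ j : Fin n, (2 * ∑ i : Fin n, ‖x i - c‖ ^ 2) := by
    have expand : ∀ i j : Fin n,
        ‖y i - y j‖ ^ 2 = ‖y i‖ ^ 2 + ‖y j‖ ^ 2 - 2 * ⟪y i, y j⟫ := by
      intro i j
      have := @norm_sub_sq_real (EuclideanSpace ℝ (Fin d)) _ _ (y i) (y j)
      linarith [this]
    have hinner : ∑ j : Fin n, ∑ i : Fin n, ⟪y i, y j⟫ = ‖∑ i : Fin n, y i‖ ^ 2 := by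
      rw [← real_inner_self_eq_norm_sq, sum_inner]
      exact Finset.sum_congr rfl fun j _ => by rw [inner_sum]; exact Finset.sum_congr rfl fun i _ => real_inner_comm _ _
    calc ∑ j : Fin n, ∑ i : Fin n, ‖x i - x j‖ ^ 2
        = ∑ j : Fin n, ∑ i : Fin n, (‖y i‖ ^ 2 + ‖y j‖ ^ 2 - 2 * ⟪y i, y j⟫) := by
          refine Finset.sum_congr rfl fun j _ => Finset.sum_congr rfl fun i _ => ?_
          rw [hxy, expand]
      _ = (n : ℝ) * (2 * ∑ i : Fin n, ‖y i‖ ^ 2) - 2 * ‖∑ i : Fin n, y i‖ ^ 2 := by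
          simp only [Finset.sum_sub_distrib, Finset.sum_add_distrib, Finset.sum_const,
            Finset.card_univ, Fintype.card_fin, ← Finset.mul_sum, ← Finset.sum_mul, hinner, nsmul_eq_mul]
          ring
      _ ≤ (n : ℝ) * (2 * ∑ i : Fin n, ‖y i‖ ^ 2) := by
          nlinarith [sq_nonneg ‖∑ i : Fin n, y i‖]
      _ = ∑ j : Fin n, (2 * ∑ i : Fin n, ‖x i - c‖ ^ 2) := by
          simp [Finset.sum_const, hy, mul_comm]
  obtain ⟨j, _, hj⟩ := Finset.exists_le_of_sum_le
    (Finset.univ_nonempty_iff.mpr (Fin.pos_iff_nonempty.mp hn)) key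
  exact ⟨j, hj⟩
end

section
/- Let x_1, …, x_n ∈ ℝ^m be unit vectors that are α-well-conditioned for some α ≥ 1, and let y_1, …, y_ℓ ∈ ℝ^m. Define the sparse multiple linear regression objective f(S) = Σ_{j=1}^ℓ dist(y_j, span{x_i : i ∈ S})². Then f is weakly-α-supermodular: f is nonnegative, nonincreasing, and for all S, T ⊆ Fin n with T \ S nonempty, f(S) - f(S ∪ T) ≤ α · |T \ S| · max_{i ∈ T \ S} (f(S) - f(S ∪ {i})). -/
open Metric Submodule Finset

local notation "⟪" a ", " b "⟫" => inner (𝕜 := ℝ) a b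

private lemma smlr_infDist_eq_proj {m : ℕ} (K : Submodule ℝ (EuclideanSpace ℝ (Fin m)))
    (y : EuclideanSpace ℝ (Fin m)) :
    Metric.infDist y (K : Set (EuclideanSpace ℝ (Fin m)))
      = ‖y - orthogonalProjection K y‖ := by
  rw [Metric.infDist_eq_iInf, ← starProjection_apply, starProjection_minimal]
  congr 1

private lemma smlr_sq_dist_split {m : ℕ} (K K' : Submodule ℝ (EuclideanSpace ℝ (Fin m)))
    (h : K ≤ K') (y : EuclideanSpace ℝ (Fin m)) :
    (Metric.infDist y (K : Set (EuclideanSpace ℝ (Fin m)))) ^ 2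
      = (Metric.infDist y (K' : Set (EuclideanSpace ℝ (Fin m)))) ^ 2
        + ‖(orthogonalProjection K' y : EuclideanSpace ℝ (Fin m))
            - orthogonalProjection K y‖ ^ 2 := by
  rw [smlr_infDist_eq_proj, smlr_infDist_eq_proj]
  set a := y - (orthogonalProjection K' y : EuclideanSpace ℝ (Fin m)) with ha
  set c := (orthogonalProjection K' y : EuclideanSpace ℝ (Fin m))
      - orthogonalProjection K y with hc
  have hbc : y - (orthogonalProjection K y : EuclideanSpace ℝ (Fin m)) = a + c := by
    rw [ha, hc]; abel
  have hcK' : c ∈ K' := sub_mem (coe_mem _) (h (coe_mem _))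
  have horth : ⟪a, c⟫ = 0 := by
    have haK : a ∈ K'ᗮ := sub_starProjection_mem_orthogonal y
    exact (Submodule.mem_orthogonal' K' a).mp haK c hcK'
  rw [hbc, @norm_add_sq_real, horth]
  ring

/-- The sparse multiple linear regression objective
`f S = Σ_j dist(y j, span {x i : i ∈ S})²` for unit vectors `x i` that are
`α`-well-conditioned is weakly-`α`-supermodular. -/
theorem smlr_weakly_supermodular
    (m n ℓ : ℕ) (α : ℝ) (hα : 1 ≤ α)
    (x : Fin n → EuclideanSpace ℝ (Fin m)) (hx : ∀ i, ‖x i‖ = 1)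
    (hcond : ∀ (S : Finset (Fin n)) (w : Fin n → ℝ), (∀ i ∉ S, w i = 0) →
      (1 / α) * ∑ i ∈ S, (w i) ^ 2 ≤ ‖∑ i ∈ S, w i • x i‖ ^ 2)
    (y : Fin ℓ → EuclideanSpace ℝ (Fin m))
    (f : Finset (Fin n) → ℝ)
    (hf : ∀ S : Finset (Fin n), f S = ∑ j : Fin ℓ,
      (Metric.infDist (y j)
        (Submodule.span ℝ (x '' ↑S) : Set (EuclideanSpace ℝ (Fin m)))) ^ 2) :
    (∀ S : Finset (Fin n), 0 ≤ f S) ∧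
    (∀ S T : Finset (Fin n), S ⊆ T → f T ≤ f S) ∧
    (∀ (S T : Finset (Fin n)) (h : (T \ S).Nonempty),
      f S - f (S ∪ T) ≤
        α * ((T \ S).card : ℝ) * (T \ S).sup' h (fun i => f S - f (S ∪ {i}))) := by
  classical
  have hα0 : 0 < α := lt_of_lt_of_le one_pos hα
  set K : Finset (Fin n) → Submodule ℝ (EuclideanSpace ℝ (Fin m)) :=
    fun S => Submodule.span ℝ (x '' ↑S) with hKdef
  have hKmono : ∀ {S T : Finset (Fin n)}, S ⊆ T → K S ≤ K T := fun {S T} hST =>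
    Submodule.span_mono (Set.image_mono (by exact_mod_cast hST))
  have hxK : ∀ {i : Fin n} {S : Finset (Fin n)}, i ∈ S → x i ∈ K S := fun {i S} hi =>
    Submodule.subset_span ⟨i, by exact_mod_cast hi, rfl⟩
  -- orthogonality of the residual
  have hperp : ∀ (S : Finset (Fin n)) (j : Fin ℓ) (v : EuclideanSpace ℝ (Fin m)), v ∈ K S →
      ⟪y j - orthogonalProjection (K S) (y j), v⟫ = 0 := by
    intro S j v hv
    exact (Submodule.mem_orthogonal' (K S) _).mp
      (sub_starProjection_mem_orthogonal (y j)) v hv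
  -- difference formula
  have hdiff : ∀ (S U : Finset (Fin n)), S ⊆ U →
      f S - f U = ∑ j : Fin ℓ,
        ‖(orthogonalProjection (K U) (y j) : EuclideanSpace ℝ (Fin m)) - orthogonalProjection (K S) (y j)‖ ^ 2 := by
    intro S U hSU
    rw [hf, hf, ← Finset.sum_sub_distrib]
    apply Finset.sum_congr rfl
    intro j _
    have := smlr_sq_dist_split (K S) (K U) (hKmono hSU) (y j)
    linarith [this]
  have hnonneg : ∀ S, 0 ≤ f S := by
    intro S; rw [hf]; positivity
  refine ⟨hnonneg, ?_, ?_⟩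
  · intro S T hST
    rw [hf, hf]
    apply Finset.sum_le_sum
    intro j _
    have h1 : Metric.infDist (y j) (K T : Set (EuclideanSpace ℝ (Fin m))) ≤ Metric.infDist (y j) (K S : Set (EuclideanSpace ℝ (Fin m))) :=
      Metric.infDist_le_infDist_of_subset (SetLike.coe_subset_coe.mpr (hKmono hST))
        ⟨0, Submodule.zero_mem _⟩
    exact pow_le_pow_left₀ Metric.infDist_nonneg h1 2
  · intro S T hne
    set R := T \ S with hR
    set S' := S ∪ T with hS'
    have hSS' : S ⊆ S' := Finset.subset_union_left
    have hRS' : R ⊆ S' := by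
      intro i hi
      rw [hR, Finset.mem_sdiff] at hi
      exact Finset.mem_union_right _ hi.1
    set b : Fin ℓ → EuclideanSpace ℝ (Fin m) := fun j => y j - orthogonalProjection (K S) (y j) with hb
    -- per i bound: ⟪b j, x i⟫ ^ 2 ≤ ‖c^i_j‖ ^ 2
    have hstep : ∀ i ∈ R, ∀ j : Fin ℓ,
        ⟪b j, x i⟫ ^ 2 ≤
          ‖(orthogonalProjection (K (S ∪ {i})) (y j) : EuclideanSpace ℝ (Fin m))
            - orthogonalProjection (K S) (y j)‖ ^ 2 := by
      intro i _ j
      set c := (orthogonalProjection (K (S ∪ {i})) (y j) : EuclideanSpace ℝ (Fin m))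
          - orthogonalProjection (K S) (y j) with hc
      have hxi : x i ∈ K (S ∪ {i}) := hxK (by simp)
      have hbac : b j = (y j - orthogonalProjection (K (S ∪ {i})) (y j)) + c := by
        rw [hb, hc]; abel
      have h1 : ⟪b j, x i⟫ = ⟪c, x i⟫ := by
        rw [hbac, inner_add_left, hperp (S ∪ {i}) j (x i) hxi, zero_add]
      have h2 : |⟪c, x i⟫| ≤ ‖c‖ := by
        have := abs_real_inner_le_norm c (x i)
        rwa [hx i, mul_one] at this
      calc ⟪b j, x i⟫ ^ 2 = |⟪c, x i⟫| ^ 2 := by rw [h1, sq_abs]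
        _ ≤ ‖c‖ ^ 2 := pow_le_pow_left₀ (abs_nonneg _) h2 2
    -- main per-j bound
    have hmain : ∀ j : Fin ℓ,
        ‖(orthogonalProjection (K S') (y j) : EuclideanSpace ℝ (Fin m)) - orthogonalProjection (K S) (y j)‖ ^ 2
          ≤ α * ∑ i ∈ R, ⟪b j, x i⟫ ^ 2 := by
      intro j
      set c := (orthogonalProjection (K S') (y j) : EuclideanSpace ℝ (Fin m))
          - orthogonalProjection (K S) (y j) with hc
      have hA0 : 0 ≤ ∑ i ∈ R, ⟪b j, x i⟫ ^ 2 := by positivity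
      have hcK : c ∈ K S' := sub_mem (coe_mem _) (hKmono hSS' (coe_mem _))
      obtain ⟨l, hl, hrep⟩ := (Finsupp.mem_span_image_iff_linearCombination ℝ).mp hcK
      set w : Fin n → ℝ := fun i => l i with hw
      have hw0 : ∀ i ∉ S', w i = 0 := by
        intro i hi
        by_contra hne'
        exact hi (by exact_mod_cast hl (Finsupp.mem_support_iff.mpr hne'))
      have hsum : ∑ i ∈ S', w i • x i = c := by
        rw [← hrep, Finsupp.linearCombination_apply, Finsupp.sum]
        apply (Finset.sum_subset ?_ ?_).symm
        · intro i hi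
          exact_mod_cast hl hi
        · intro i _ hi
          rw [hw]
          simp [Finsupp.notMem_support_iff.mp hi]
      have hcond' : (1 / α) * ∑ i ∈ S', w i ^ 2 ≤ ‖c‖ ^ 2 := by
        rw [← hsum]; exact hcond S' w hw0
      have hW : ∑ i ∈ S', w i ^ 2 ≤ α * ‖c‖ ^ 2 := by
        have := mul_le_mul_of_nonneg_left hcond' (le_of_lt hα0)
        rwa [← mul_assoc, mul_one_div, div_self (ne_of_gt hα0), one_mul] at this
      -- ‖c‖² = Σ_{i∈R} w i * ⟪b j, x i⟫
      have hbac : b j = (y j - orthogonalProjection (K S') (y j)) + c := by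
        rw [hb, hc]; abel
      have hbc : ⟪b j, c⟫ = ‖c‖ ^ 2 := by
        rw [hbac, inner_add_left]
        have : ⟪y j - (orthogonalProjection (K S') (y j) : EuclideanSpace ℝ (Fin m)), c⟫ = 0 :=
          (Submodule.mem_orthogonal' (K S') _).mp
            (sub_starProjection_mem_orthogonal (y j)) c hcK
        rw [this, zero_add, real_inner_self_eq_norm_sq]
      have hexp : ⟪b j, c⟫ = ∑ i ∈ R, w i * ⟪b j, x i⟫ := by
        rw [← hsum, inner_sum]
        simp_rw [real_inner_smul_right]
        apply (Finset.sum_subset hRS' ?_).symm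
        intro i hi hiR
        have hiS : i ∈ S := by
          rw [hS', Finset.mem_union] at hi
          rw [hR, Finset.mem_sdiff] at hiR
          tauto
        rw [hperp S j (x i) (hxK hiS), mul_zero]
      have hCS : (∑ i ∈ R, w i * ⟪b j, x i⟫) ^ 2 ≤
          (∑ i ∈ R, w i ^ 2) * ∑ i ∈ R, ⟪b j, x i⟫ ^ 2 :=
        Finset.sum_mul_sq_le_sq_mul_sq R w _
      have hWR : ∑ i ∈ R, w i ^ 2 ≤ ∑ i ∈ S', w i ^ 2 :=
        Finset.sum_le_sum_of_subset_of_nonneg hRS' (fun _ _ _ => sq_nonneg _)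
      -- combine
      set N := ‖c‖ ^ 2 with hN
      set A := ∑ i ∈ R, ⟪b j, x i⟫ ^ 2 with hA
      have hN0 : 0 ≤ N := by positivity
      have key : N * N ≤ (α * N) * A := by
        have h1 : N * N = (∑ i ∈ R, w i * ⟪b j, x i⟫) ^ 2 := by
          rw [← hbc, ← hexp]; ring
        calc N * N = (∑ i ∈ R, w i * ⟪b j, x i⟫) ^ 2 := h1
          _ ≤ (∑ i ∈ R, w i ^ 2) * A := hCS
          _ ≤ (α * N) * A := by
              apply mul_le_mul_of_nonneg_right _ hA0
              exact le_trans hWR hW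
      rcases eq_or_lt_of_le hN0 with h0 | h0
      · rw [← h0]; positivity
      · have := le_of_mul_le_mul_left (by linarith [key] : N * N ≤ N * (α * A)) h0
        linarith
    -- assemble
    have hsum1 : f S - f (S ∪ T) ≤ α * ∑ i ∈ R, ∑ j : Fin ℓ, ⟪b j, x i⟫ ^ 2 := by
      rw [hdiff S S' hSS']
      calc ∑ j : Fin ℓ, ‖(orthogonalProjection (K S') (y j) : EuclideanSpace ℝ (Fin m))
              - orthogonalProjection (K S) (y j)‖ ^ 2
          ≤ ∑ j : Fin ℓ, α * ∑ i ∈ R, ⟪b j, x i⟫ ^ 2 :=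
            Finset.sum_le_sum (fun j _ => hmain j)
        _ = α * ∑ i ∈ R, ∑ j : Fin ℓ, ⟪b j, x i⟫ ^ 2 := by
            rw [← Finset.mul_sum, Finset.sum_comm]
    have hsum2 : ∀ i ∈ R, ∑ j : Fin ℓ, ⟪b j, x i⟫ ^ 2 ≤
        R.sup' hne (fun i => f S - f (S ∪ {i})) := by
      intro i hi
      have h1 : ∑ j : Fin ℓ, ⟪b j, x i⟫ ^ 2 ≤ f S - f (S ∪ {i}) := by
        rw [hdiff S (S ∪ {i}) Finset.subset_union_left]
        exact Finset.sum_le_sum (fun j _ => hstep i hi j)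
      exact le_trans h1 (Finset.le_sup' (fun i => f S - f (S ∪ {i})) hi)
    calc f S - f (S ∪ T) ≤ α * ∑ i ∈ R, ∑ j : Fin ℓ, ⟪b j, x i⟫ ^ 2 := hsum1
      _ ≤ α * ∑ i ∈ R, R.sup' hne (fun i => f S - f (S ∪ {i})) := by
          apply mul_le_mul_of_nonneg_left (Finset.sum_le_sum hsum2) (le_of_lt hα0)
      _ = α * (R.card : ℝ) * R.sup' hne (fun i => f S - f (S ∪ {i})) := by
          rw [Finset.sum_const, nsmul_eq_mul]; ring
end

section
/- Let x_1, …, x_n ∈ ℝ^m be unit vectors, let S, T ⊆ Fin n, let P denote the orthogonal projection onto W = span{x_j : j ∈ S}, and suppose (I − P) x_i ≠ 0 for every i ∈ T \ S; set z_i = (I − P) x_i / ‖(I − P) x_i‖ for i ∈ T \ S. If σ > 0 satisfies ‖Σ_{i ∈ S ∪ T} v_i x_i‖ ≥ σ · ‖v‖ for every coefficient vector v supported on S ∪ T, then for every coefficient vector w supported on T \ S, ‖Σ_{i ∈ T \ S} w_i z_i‖ ≥ σ · ‖w‖. -/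
/-- Projecting the columns `x i`, `i ∈ T \ S`, away from `span {x j : j ∈ S}` and
renormalizing does not decrease the smallest singular value: if
`‖Σ_{i ∈ S ∪ T} v i • x i‖ ≥ σ ‖v‖` for all `v` supported on `S ∪ T`, then
`‖Σ_{i ∈ T \ S} w i • z i‖ ≥ σ ‖w‖` for all `w` supported on `T \ S`. -/
theorem projected_columns_smallest_singular_value
    (m n : ℕ) (x : Fin n → EuclideanSpace ℝ (Fin m)) (hx : ∀ i, ‖x i‖ = 1)
    (S T : Finset (Fin n))
    (W : Submodule ℝ (EuclideanSpace ℝ (Fin m)))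
    (hW : W = Submodule.span ℝ (x '' ↑S))
    (hproj : ∀ i ∈ T \ S,
      x i - (W.orthogonalProjectionOnto (x i) : EuclideanSpace ℝ (Fin m)) ≠ 0)
    (z : Fin n → EuclideanSpace ℝ (Fin m))
    (hz : ∀ i ∈ T \ S,
      z i = ‖x i - (W.orthogonalProjectionOnto (x i) : EuclideanSpace ℝ (Fin m))‖⁻¹ •
        (x i - (W.orthogonalProjectionOnto (x i) : EuclideanSpace ℝ (Fin m))))
    (σ : ℝ) (hσ : 0 < σ)
    (hcond : ∀ v : Fin n → ℝ, (∀ i ∉ S ∪ T, v i = 0) →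
      σ * Real.sqrt (∑ i ∈ S ∪ T, (v i) ^ 2) ≤ ‖∑ i ∈ S ∪ T, v i • x i‖)
    (w : Fin n → ℝ) (hw : ∀ i ∉ T \ S, w i = 0) :
    σ * Real.sqrt (∑ i ∈ T \ S, (w i) ^ 2) ≤ ‖∑ i ∈ T \ S, w i • z i‖ := by
  classical
  set c : Fin n → ℝ := fun i => ‖x i - (W.orthogonalProjectionOnto (x i) : EuclideanSpace ℝ (Fin m))‖⁻¹ with hc
  -- c i ≥ 1 on T \ S
  have hc1 : ∀ i ∈ T \ S, (1 : ℝ) ≤ c i := by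
    intro i hi
    have hne : x i - (W.orthogonalProjectionOnto (x i) : EuclideanSpace ℝ (Fin m)) ≠ 0 := hproj i hi
    have hpos : 0 < ‖x i - (W.orthogonalProjectionOnto (x i) : EuclideanSpace ℝ (Fin m))‖ := norm_pos_iff.2 hne
    have hle : ‖x i - (W.orthogonalProjectionOnto (x i) : EuclideanSpace ℝ (Fin m))‖ ≤ 1 := by
      have horth : x i - (W.orthogonalProjectionOnto (x i) : EuclideanSpace ℝ (Fin m)) ∈ Wᗮ :=
        by exact W.sub_starProjection_mem_orthogonal (x i)
      have hinner : (inner ℝ (W.orthogonalProjectionOnto (x i) : EuclideanSpace ℝ (Fin m))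
          (x i - (W.orthogonalProjectionOnto (x i) : EuclideanSpace ℝ (Fin m))) : ℝ) = 0 :=
        Submodule.inner_right_of_mem_orthogonal (W.orthogonalProjectionOnto (x i)).2 horth
      have hsq : ‖x i‖ ^ 2 = ‖(W.orthogonalProjectionOnto (x i) : EuclideanSpace ℝ (Fin m))‖ ^ 2
          + ‖x i - (W.orthogonalProjectionOnto (x i) : EuclideanSpace ℝ (Fin m))‖ ^ 2 := by
        have := norm_add_sq_real (W.orthogonalProjectionOnto (x i) : EuclideanSpace ℝ (Fin m))
          (x i - (W.orthogonalProjectionOnto (x i) : EuclideanSpace ℝ (Fin m)))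
        rw [hinner] at this
        simpa using this
      nlinarith [hx i, sq_nonneg ‖(W.orthogonalProjectionOnto (x i) : EuclideanSpace ℝ (Fin m))‖, hpos]
    show (1:ℝ) ≤ ‖x i - (W.orthogonalProjectionOnto (x i) : EuclideanSpace ℝ (Fin m))‖⁻¹
    rw [← one_div]
    exact one_le_one_div hpos hle
  -- the projected part lies in the span
  have hp : (∑ i ∈ T \ S, (w i * c i) • (W.orthogonalProjectionOnto (x i) : EuclideanSpace ℝ (Fin m))) ∈
      Submodule.span ℝ (x '' ↑S) := by
    rw [← hW]
    exact Submodule.sum_mem _ fun i _ => Submodule.smul_mem _ _ (W.orthogonalProjectionOnto (x i)).2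
  obtain ⟨l, hl, hlc⟩ := (Finsupp.mem_span_image_iff_linearCombination ℝ).1 hp
  rw [Finsupp.mem_supported'] at hl
  set v : Fin n → ℝ := fun i => (if i ∈ T \ S then w i * c i else 0) - l i with hv
  have hv0 : ∀ i ∉ S ∪ T, v i = 0 := by
    intro i hi
    have hiS : i ∉ S := fun h => hi (Finset.mem_union_left _ h)
    have hiTS : i ∉ T \ S := fun h => hi (Finset.mem_union_right _ (Finset.mem_sdiff.1 h).1)
    have hvi : v i = (if i ∈ T \ S then w i * c i else 0) - l i := rfl
    rw [hvi, if_neg hiTS, hl i hiS, sub_zero]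
  -- compute the combination
  have hsum : ∑ i ∈ S ∪ T, v i • x i = ∑ i ∈ T \ S, w i • z i := by
    have h1 : ∑ i ∈ S ∪ T, (if i ∈ T \ S then w i * c i else 0) • x i
        = ∑ i ∈ T \ S, (w i * c i) • x i := by
      rw [← Finset.sum_subset (Finset.sdiff_subset.trans (Finset.subset_union_right))]
      · exact Finset.sum_congr rfl fun i hi => by rw [if_pos hi]
      · intro i _ hi; rw [if_neg hi, zero_smul]
    have h2 : ∑ i ∈ S ∪ T, l i • x i
        = ∑ i ∈ T \ S, (w i * c i) • (W.orthogonalProjectionOnto (x i) : EuclideanSpace ℝ (Fin m)) := by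
      rw [← hlc, Finsupp.linearCombination_apply, Finsupp.sum]
      refine (Finset.sum_subset ?_ ?_).symm
      · intro i hi
        have : i ∈ S := by
          by_contra h
          exact Finsupp.mem_support_iff.1 hi (hl i h)
        exact Finset.mem_union_left _ this
      · intro i _ hi
        rw [Finsupp.notMem_support_iff.1 hi, zero_smul]
    calc ∑ i ∈ S ∪ T, v i • x i
        = ∑ i ∈ S ∪ T, ((if i ∈ T \ S then w i * c i else 0) • x i - l i • x i) := by
          refine Finset.sum_congr rfl fun i _ => ?_
          rw [hv]; rw [sub_smul]
      _ = ∑ i ∈ S ∪ T, (if i ∈ T \ S then w i * c i else 0) • x i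
            - ∑ i ∈ S ∪ T, l i • x i := Finset.sum_sub_distrib _ _
      _ = ∑ i ∈ T \ S, (w i * c i) • x i
            - ∑ i ∈ T \ S, (w i * c i) • (W.orthogonalProjectionOnto (x i) : EuclideanSpace ℝ (Fin m)) := by
          rw [h1, h2]
      _ = ∑ i ∈ T \ S, ((w i * c i) • x i - (w i * c i) • (W.orthogonalProjectionOnto (x i) : EuclideanSpace ℝ (Fin m))) :=
          (Finset.sum_sub_distrib _ _).symm
      _ = ∑ i ∈ T \ S, w i • z i := by
          refine Finset.sum_congr rfl fun i hi => ?_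
          rw [hz i hi, ← smul_sub, smul_smul, mul_comm (w i) (c i), ← smul_smul]
  have hkey := hcond v hv0
  rw [hsum] at hkey
  refine le_trans ?_ hkey
  have hmono : ∑ i ∈ T \ S, (w i) ^ 2 ≤ ∑ i ∈ S ∪ T, (v i) ^ 2 := by
    have h1 : ∑ i ∈ T \ S, (w i) ^ 2 ≤ ∑ i ∈ T \ S, (v i) ^ 2 := by
      refine Finset.sum_le_sum fun i hi => ?_
      have hiS : i ∉ S := (Finset.mem_sdiff.1 hi).2
      have hvi : v i = w i * c i := by
        have h : v i = (if i ∈ T \ S then w i * c i else 0) - l i := rfl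
        rw [h, if_pos hi, hl i hiS, sub_zero]
      rw [hvi, mul_pow]
      have h2 : (1:ℝ) ≤ c i ^ 2 := by nlinarith [hc1 i hi]
      calc (w i) ^ 2 = (w i) ^ 2 * 1 := (mul_one _).symm
        _ ≤ (w i) ^ 2 * (c i) ^ 2 := mul_le_mul_of_nonneg_left h2 (sq_nonneg _)
    exact h1.trans (Finset.sum_le_sum_of_subset_of_nonneg
      ((Finset.sdiff_subset).trans Finset.subset_union_right) fun i _ _ => sq_nonneg (v i))
  exact mul_le_mul_of_nonneg_left (Real.sqrt_le_sqrt hmono) hσ.le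
end

section
/- Let x_1, …, x_n ∈ ℝ^m be unit vectors that are α-well-conditioned for some α ≥ 1, let y ∈ ℝ^m with y ≠ 0, define f(S) = dist(y, span{x_i : i ∈ S})², and let E be a real with 0 < E ≤ ‖y‖². Let k ≥ 1 and suppose there exists S* ⊆ Fin n with |S*| ≤ k and f(S*) ≤ E/4. Then there exists S ⊆ Fin n with |S| ≤ ⌈α · k · ln( ‖y‖² / (E − E/4) )⌉ and f(S) ≤ E. -/
open Metric Finset RealInnerProductSpace

noncomputable def Fd {m n : ℕ} (x : Fin n → EuclideanSpace ℝ (Fin m))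
    (y : EuclideanSpace ℝ (Fin m)) (S : Finset (Fin n)) : ℝ :=
  (Metric.infDist y
    (Submodule.span ℝ (x '' ↑S) : Set (EuclideanSpace ℝ (Fin m)))) ^ 2

lemma infDist_orth {m : ℕ} (U : Submodule ℝ (EuclideanSpace ℝ (Fin m))) (y : EuclideanSpace ℝ (Fin m)) :
    Metric.infDist y (U : Set (EuclideanSpace ℝ (Fin m))) = ‖y - Submodule.orthogonalProjectionOnto U y‖ := by
  rw [Metric.infDist_eq_iInf, ← Submodule.starProjection_apply, Submodule.starProjection_minimal]
  simp_rw [dist_eq_norm]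
  rfl

lemma Fd_eq {m n : ℕ} (x : Fin n → EuclideanSpace ℝ (Fin m)) (y : EuclideanSpace ℝ (Fin m))
    (S : Finset (Fin n)) :
    Fd x y S = ‖y - Submodule.orthogonalProjectionOnto (Submodule.span ℝ (x '' ↑S)) y‖ ^ 2 := by
  rw [Fd, infDist_orth]

lemma Fd_le {m n : ℕ} (x : Fin n → EuclideanSpace ℝ (Fin m)) (y z : EuclideanSpace ℝ (Fin m))
    (S : Finset (Fin n)) (hz : z ∈ Submodule.span ℝ (x '' ↑S)) :
    Fd x y S ≤ ‖y - z‖ ^ 2 := by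
  rw [Fd]
  have h1 : Metric.infDist y (Submodule.span ℝ (x '' ↑S) : Set (EuclideanSpace ℝ (Fin m))) ≤ ‖y - z‖ := by
    simpa [dist_eq_norm] using Metric.infDist_le_dist_of_mem hz
  exact pow_le_pow_left₀ Metric.infDist_nonneg h1 2

lemma step_lemma {m n : ℕ} {α : ℝ} (hα : 1 ≤ α) {k : ℕ} (hk : 1 ≤ k)
    (x : Fin n → EuclideanSpace ℝ (Fin m)) (hx : ∀ i, ‖x i‖ = 1)
    (hcond : ∀ (S : Finset (Fin n)) (w : Fin n → ℝ), (∀ i ∉ S, w i = 0) →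
      (1 / α) * ∑ i ∈ S, (w i) ^ 2 ≤ ‖∑ i ∈ S, w i • x i‖ ^ 2)
    (y : EuclideanSpace ℝ (Fin m))
    (S Sstar : Finset (Fin n)) (hcard : Sstar.card ≤ k)
    (hgap : Fd x y Sstar < Fd x y S) :
    ∃ i, Fd x y (insert i S) - Fd x y Sstar ≤
      (1 - 1/(α*(k:ℝ))) * (Fd x y S - Fd x y Sstar) := by
  have hα0 : (0:ℝ) < α := lt_of_lt_of_le one_pos hα
  have hk0 : (0:ℝ) < (k:ℝ) := by exact_mod_cast hk
  set V := Submodule.span ℝ (x '' (↑S : Set (Fin n))) with hV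
  set W := Submodule.span ℝ (x '' (↑(S ∪ Sstar) : Set (Fin n))) with hW
  have hVW : V ≤ W := Submodule.span_mono (Set.image_mono (by
    simp only [Finset.coe_union]; exact Set.subset_union_left))
  have hSstarW : Submodule.span ℝ (x '' (↑Sstar : Set (Fin n))) ≤ W :=
    Submodule.span_mono (Set.image_mono (by
      simp only [Finset.coe_union]; exact Set.subset_union_right))
  set P : EuclideanSpace ℝ (Fin m) := ↑(Submodule.orthogonalProjectionOnto V y) with hP
  set Q : EuclideanSpace ℝ (Fin m) := ↑(Submodule.orthogonalProjectionOnto W y) with hQ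
  set r : EuclideanSpace ℝ (Fin m) := y - P with hr
  set v : EuclideanSpace ℝ (Fin m) := Q - P with hv
  have hrV : ∀ z ∈ V, ⟪r, z⟫ = 0 := fun z hz => Submodule.starProjection_inner_eq_zero y z hz
  have hrW : ∀ z ∈ W, ⟪y - Q, z⟫ = 0 := fun z hz => Submodule.starProjection_inner_eq_zero y z hz
  have hPV : P ∈ V := Submodule.coe_mem _
  have hQW : Q ∈ W := Submodule.coe_mem _
  have hvW : v ∈ W := W.sub_mem hQW (hVW hPV)
  have hdecomp : r = (y - Q) + v := by rw [hr, hv]; abel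
  have hinner_rv : ⟪r, v⟫ = ‖v‖^2 := by
    rw [hdecomp, inner_add_left, hrW v hvW, real_inner_self_eq_norm_sq]; ring
  have pyth : ‖r‖^2 = ‖y - Q‖^2 + ‖v‖^2 := by
    rw [hdecomp, norm_add_sq_real, hrW v hvW]; ring
  have hQle : ‖y - Q‖^2 ≤ Fd x y Sstar := by
    calc ‖y - Q‖^2 = Fd x y (S ∪ Sstar) := (Fd_eq x y (S ∪ Sstar)).symm
      _ ≤ ‖y - (Submodule.orthogonalProjectionOnto (Submodule.span ℝ (x '' (↑Sstar : Set (Fin n)))) y : EuclideanSpace ℝ (Fin m))‖^2 :=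
          Fd_le x y _ _ (hSstarW (Submodule.coe_mem _))
      _ = Fd x y Sstar := (Fd_eq x y Sstar).symm
  have hFdS : Fd x y S = ‖r‖^2 := Fd_eq x y S
  set g := Fd x y S - Fd x y Sstar with hgdef
  have hg0 : 0 < g := sub_pos.2 hgap
  have hv2 : g ≤ ‖v‖^2 := by rw [hgdef, hFdS]; linarith
  have hvpos : 0 < ‖v‖^2 := lt_of_lt_of_le hg0 hv2
  -- representation of v
  obtain ⟨l, hl, hlv⟩ := (Finsupp.mem_span_image_iff_linearCombination ℝ).1 hvW
  set w : Fin n → ℝ := fun i => l i with hwdef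
  have hlsupp : (↑l.support : Set (Fin n)) ⊆ (↑(S ∪ Sstar) : Set (Fin n)) :=
    Finsupp.mem_supported ℝ l |>.1 hl
  have hw0 : ∀ i ∉ S ∪ Sstar, w i = 0 := by
    intro i hi
    by_contra h
    exact hi (hlsupp (Finsupp.mem_support_iff.2 h))
  have hsum : ∑ i ∈ S ∪ Sstar, w i • x i = v := by
    rw [← hlv, Finsupp.linearCombination_apply, Finsupp.sum]
    exact (Finset.sum_subset (by exact_mod_cast hlsupp)
      (fun i _ hi => by rw [show w i = 0 from Finsupp.notMem_support_iff.1 hi, zero_smul])).symm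
  have hcond' := hcond (S ∪ Sstar) w hw0
  rw [hsum] at hcond'
  have hwsum : ∑ i ∈ S ∪ Sstar, (w i)^2 ≤ α * ‖v‖^2 := by
    rw [one_div, inv_mul_le_iff₀ hα0] at hcond'
    exact hcond'
  -- split the inner product sum
  set T := Sstar \ S with hT
  have hTsub : T ⊆ S ∪ Sstar := (Finset.sdiff_subset).trans Finset.subset_union_right
  have hxV : ∀ i ∈ S, x i ∈ V := fun i hi => Submodule.subset_span ⟨i, by simpa using hi, rfl⟩
  have hsplit : ⟪r, v⟫ = ∑ i ∈ T, w i * ⟪r, x i⟫ := by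
    have h1 : ⟪r, v⟫ = ∑ i ∈ S ∪ Sstar, w i * ⟪r, x i⟫ := by
      rw [← hsum, inner_sum]
      exact Finset.sum_congr rfl fun i _ => real_inner_smul_right r (x i) (w i)
    rw [h1]
    refine (Finset.sum_subset hTsub fun i hi hiT => ?_).symm
    have hiS : i ∈ S := by
      rcases Finset.mem_union.1 hi with h | h
      · exact h
      · by_contra hc; exact hiT (Finset.mem_sdiff.2 ⟨h, hc⟩)
    rw [hrV (x i) (hxV i hiS), mul_zero]
  have hTne : T.Nonempty := by
    rw [Finset.nonempty_iff_ne_empty]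
    intro h
    rw [h, Finset.sum_empty] at hsplit
    rw [hsplit] at hinner_rv
    exact absurd hinner_rv.symm (ne_of_gt hvpos)
  obtain ⟨i₀, hi₀T, hmax⟩ := T.exists_max_image (fun i => ⟪r, x i⟫ ^ 2) hTne
  set M2 := ⟪r, x i₀⟫ ^ 2 with hM2
  have hM2nn : 0 ≤ M2 := sq_nonneg _
  have hTcard : (T.card : ℝ) ≤ (k : ℝ) := by
    exact_mod_cast (Finset.card_le_card Finset.sdiff_subset).trans hcard
  have hCS : (∑ i ∈ T, w i * ⟪r, x i⟫) ^ 2 ≤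
      (∑ i ∈ T, (w i) ^ 2) * (∑ i ∈ T, ⟪r, x i⟫ ^ 2) :=
    Finset.sum_mul_sq_le_sq_mul_sq T _ _
  have hsum1 : ∑ i ∈ T, (w i) ^ 2 ≤ α * ‖v‖ ^ 2 :=
    (Finset.sum_le_sum_of_subset_of_nonneg hTsub fun i _ _ => sq_nonneg _).trans hwsum
  have hsum2 : ∑ i ∈ T, ⟪r, x i⟫ ^ 2 ≤ (k : ℝ) * M2 := by
    calc ∑ i ∈ T, ⟪r, x i⟫ ^ 2 ≤ T.card • M2 :=
          Finset.sum_le_card_nsmul T _ M2 fun i hi => hmax i hi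
      _ = (T.card : ℝ) * M2 := nsmul_eq_mul _ _
      _ ≤ (k : ℝ) * M2 := mul_le_mul_of_nonneg_right hTcard hM2nn
  have key : ‖v‖ ^ 2 * ‖v‖ ^ 2 ≤ (α * ‖v‖ ^ 2) * ((k : ℝ) * M2) := by
    have h1 : ‖v‖ ^ 2 * ‖v‖ ^ 2 = (∑ i ∈ T, w i * ⟪r, x i⟫) ^ 2 := by
      rw [← hsplit, hinner_rv]; ring
    rw [h1]
    refine hCS.trans (mul_le_mul hsum1 hsum2 ?_ ?_)
    · exact Finset.sum_nonneg fun i _ => sq_nonneg _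
    · positivity
  have hvle : ‖v‖ ^ 2 ≤ α * (k : ℝ) * M2 := by
    have key' := key
    rw [show (α * ‖v‖ ^ 2) * ((k : ℝ) * M2) = ‖v‖ ^ 2 * (α * (k : ℝ) * M2) by ring] at key'
    exact le_of_mul_le_mul_left key' hvpos
  have hM : g / (α * (k : ℝ)) ≤ M2 := by
    rw [div_le_iff₀ (by positivity)]
    calc g ≤ ‖v‖ ^ 2 := hv2
      _ ≤ α * (k : ℝ) * M2 := hvle
      _ = M2 * (α * (k : ℝ)) := by ring
  -- now use i₀
  refine ⟨i₀, ?_⟩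
  have hins : Fd x y (insert i₀ S) ≤ Fd x y S - M2 := by
    set c := ⟪r, x i₀⟫ with hc
    have hz : P + c • x i₀ ∈ Submodule.span ℝ (x '' (↑(insert i₀ S) : Set (Fin n))) := by
      have hmono : V ≤ Submodule.span ℝ (x '' (↑(insert i₀ S) : Set (Fin n))) :=
        Submodule.span_mono (Set.image_mono (by simp))
      refine Submodule.add_mem _ (hmono hPV) (Submodule.smul_mem _ _ ?_)
      exact Submodule.subset_span ⟨i₀, by simp, rfl⟩
    have h1 := Fd_le x y (P + c • x i₀) (insert i₀ S) hz
    have h2 : y - (P + c • x i₀) = r - c • x i₀ := by rw [hr]; abel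
    have h3 : ‖r - c • x i₀‖ ^ 2 = ‖r‖ ^ 2 - M2 := by
      rw [norm_sub_sq_real, real_inner_smul_right, norm_smul, hx i₀, hM2, hc]
      simp [Real.norm_eq_abs, sq_abs]
      ring
    rw [h2, h3] at h1
    rw [hFdS]
    exact h1
  have hring : (1 - 1 / (α * (k:ℝ))) * g = g - g / (α * (k:ℝ)) := by ring
  rw [hring]
  rw [hgdef] at *
  linarith [hins, hM]


lemma Fd_nonneg {m n : ℕ} (x : Fin n → EuclideanSpace ℝ (Fin m)) (y : EuclideanSpace ℝ (Fin m))
    (S : Finset (Fin n)) : 0 ≤ Fd x y S := sq_nonneg _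

/-- Greedy guarantee for sparse regression (improving Natarajan's bound): if some
`S*` with `|S*| ≤ k` achieves `f S* ≤ E/4`, then there is `S` with
`|S| ≤ ⌈α k ln(‖y‖² / (E - E/4))⌉` and `f S ≤ E`. -/
theorem sparse_regression_greedy
    (m n : ℕ) (α : ℝ) (hα : 1 ≤ α)
    (x : Fin n → EuclideanSpace ℝ (Fin m)) (hx : ∀ i, ‖x i‖ = 1)
    (hcond : ∀ (S : Finset (Fin n)) (w : Fin n → ℝ), (∀ i ∉ S, w i = 0) →
      (1 / α) * ∑ i ∈ S, (w i) ^ 2 ≤ ‖∑ i ∈ S, w i • x i‖ ^ 2)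
    (y : EuclideanSpace ℝ (Fin m)) (hy : y ≠ 0)
    (f : Finset (Fin n) → ℝ)
    (hf : ∀ S : Finset (Fin n), f S =
      (Metric.infDist y
        (Submodule.span ℝ (x '' ↑S) : Set (EuclideanSpace ℝ (Fin m)))) ^ 2)
    (E : ℝ) (hE : 0 < E) (hE' : E ≤ ‖y‖ ^ 2)
    (k : ℕ) (hk : 1 ≤ k)
    (hex : ∃ Sstar : Finset (Fin n), Sstar.card ≤ k ∧ f Sstar ≤ E / 4) :
    ∃ S : Finset (Fin n),
      S.card ≤ ⌈α * (k : ℝ) * Real.log (‖y‖ ^ 2 / (E - E / 4))⌉₊ ∧ f S ≤ E := by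
  obtain ⟨Sstar, hScard, hSstar⟩ := hex
  have hfF : ∀ S, f S = Fd x y S := fun S => by rw [hf S]; rfl
  have hα0 : (0:ℝ) < α := lt_of_lt_of_le one_pos hα
  have hk1 : (1:ℝ) ≤ (k:ℝ) := by exact_mod_cast hk
  have hk0 : (0:ℝ) < (k:ℝ) := lt_of_lt_of_le one_pos hk1
  have hak : (1:ℝ) ≤ α * k := by nlinarith
  set q : ℝ := 1 - 1/(α*(k:ℝ)) with hq
  have hq0 : 0 ≤ q := by
    have h1 : 1/(α*(k:ℝ)) ≤ 1 := by
      rw [div_le_one (by positivity)]; exact hak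
    simp only [hq]; linarith
  have hy2 : (0:ℝ) < ‖y‖^2 := by
    have : 0 < ‖y‖ := norm_pos_iff.2 hy
    positivity
  have hSstarF : Fd x y Sstar ≤ E/4 := by rw [← hfF]; exact hSstar
  have hmain : ∀ t : ℕ, ∃ S : Finset (Fin n), S.card ≤ t ∧
      (Fd x y S ≤ E ∨ Fd x y S - Fd x y Sstar ≤ ‖y‖^2 * q^t) := by
    intro t
    induction t with
    | zero =>
      refine ⟨∅, by simp, Or.inr ?_⟩
      have h0 : Fd x y ∅ ≤ ‖y‖^2 := by
        have h1 := Fd_le x y 0 ∅ (Submodule.zero_mem _)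
        simpa using h1
      have hnn : 0 ≤ Fd x y Sstar := Fd_nonneg x y Sstar
      simp only [pow_zero, mul_one]
      linarith
    | succ t ih =>
      obtain ⟨S, hcardS, hS⟩ := ih
      rcases hS with hS | hS
      · exact ⟨S, hcardS.trans (Nat.le_succ t), Or.inl hS⟩
      by_cases hle : Fd x y S ≤ E
      · exact ⟨S, hcardS.trans (Nat.le_succ t), Or.inl hle⟩
      push_neg at hle
      have hgap : Fd x y Sstar < Fd x y S := by linarith
      obtain ⟨i, hi⟩ := step_lemma hα hk x hx hcond y S Sstar hScard hgap
      refine ⟨insert i S, (Finset.card_insert_le _ _).trans (Nat.succ_le_succ hcardS), Or.inr ?_⟩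
      calc Fd x y (insert i S) - Fd x y Sstar ≤ q * (Fd x y S - Fd x y Sstar) := hi
        _ ≤ q * (‖y‖^2 * q^t) := mul_le_mul_of_nonneg_left hS hq0
        _ = ‖y‖^2 * q^(t+1) := by ring
  obtain ⟨S, hcardS, hS⟩ := hmain ⌈α * (k : ℝ) * Real.log (‖y‖ ^ 2 / (E - E / 4))⌉₊
  refine ⟨S, hcardS, ?_⟩
  rw [hfF]
  rcases hS with hS | hS
  · exact hS
  set t := ⌈α * (k : ℝ) * Real.log (‖y‖ ^ 2 / (E - E / 4))⌉₊ with ht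
  have hE34 : (0:ℝ) < E - E/4 := by linarith
  have hqexp : q ≤ Real.exp (-(1/(α*(k:ℝ)))) := by
    have h1 := Real.add_one_le_exp (-(1/(α*(k:ℝ))))
    simp only [hq]; linarith
  have hqt : q^t ≤ Real.exp (-(1/(α*(k:ℝ))))^t := pow_le_pow_left₀ hq0 hqexp t
  have hexp : Real.exp (-(1/(α*(k:ℝ))))^t = Real.exp (-((t:ℝ)/(α*(k:ℝ)))) := by
    rw [← Real.exp_nat_mul]
    congr 1
    field_simp
  have hlogle : α * (k:ℝ) * Real.log (‖y‖ ^ 2 / (E - E / 4)) ≤ (t:ℝ) := Nat.le_ceil _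
  have hfinal : Real.exp (-((t:ℝ)/(α*(k:ℝ)))) ≤ (E - E/4)/‖y‖^2 := by
    rw [show (E - E/4)/‖y‖^2 = Real.exp (Real.log ((E-E/4)/‖y‖^2)) from
      (Real.exp_log (by positivity)).symm]
    apply Real.exp_le_exp.2
    have hlogswap : Real.log ((E-E/4)/‖y‖^2) = - Real.log (‖y‖^2/(E-E/4)) := by
      rw [← Real.log_inv]
      congr 1
      rw [inv_div]
    rw [hlogswap, neg_le_neg_iff]
    rw [le_div_iff₀ (by positivity)]
    calc Real.log (‖y‖^2/(E-E/4)) * (α * (k:ℝ)) = α * (k:ℝ) * Real.log (‖y‖^2/(E-E/4)) := by ring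
      _ ≤ (t:ℝ) := hlogle
  have hbound : ‖y‖^2 * q^t ≤ E - E/4 := by
    calc ‖y‖^2 * q^t ≤ ‖y‖^2 * ((E - E/4)/‖y‖^2) := by
          apply mul_le_mul_of_nonneg_left _ (le_of_lt hy2)
          calc q^t ≤ Real.exp (-(1/(α*(k:ℝ))))^t := hqt
            _ = Real.exp (-((t:ℝ)/(α*(k:ℝ)))) := hexp
            _ ≤ (E - E/4)/‖y‖^2 := hfinal
      _ = E - E/4 := by field_simp
  linarith
end

section
/- Let x_1, …, x_n ∈ ℝ^m be unit vectors that are α-well-conditioned for some α ≥ 1, and define the column subset selection objective f(S) = Σ_{j=1}^n dist(x_j, span{x_i : i ∈ S})². Let k ≥ 1, let S* ⊆ Fin n with |S*| ≤ k and f(S*) > 0, let ρ ≥ 1 and δ > 0 with δ ≤ ρ, and suppose S₀ ⊆ Fin n satisfies f(S₀) ≤ ρ · f(S*). Then there exists S ⊆ Fin n with S₀ ⊆ S, |S| ≤ |S₀| + ⌈α · k · ln(ρ/δ)⌉, and f(S) ≤ (1 + δ) · f(S*). -/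
set_option maxHeartbeats 1000000

open Metric Submodule Finset RealInnerProductSpace

noncomputable section

variable {E : Type*} [NormedAddCommGroup E] [InnerProductSpace ℝ E]

private lemma norm_sub_orthProj_le (K : Submodule ℝ E) [CompleteSpace K] (v : E)
    {y : E} (hy : y ∈ K) : ‖v - orthogonalProjection K v‖ ≤ ‖v - y‖ := by
  have h0 : (v - y) = (v - orthogonalProjection K v) + ((orthogonalProjection K v : E) - y) := by
    abel
  have horth : ⟪v - orthogonalProjection K v, (orthogonalProjection K v : E) - y⟫ = 0 :=
    starProjection_inner_eq_zero v _ (K.sub_mem (orthogonalProjection K v).2 hy)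
  have hexp := norm_add_sq_real (v - orthogonalProjection K v)
    ((orthogonalProjection K v : E) - y)
  rw [← h0, horth] at hexp
  nlinarith [norm_nonneg (v - y), norm_nonneg (v - (orthogonalProjection K v : E)),
    sq_nonneg ‖(orthogonalProjection K v : E) - y‖]

private lemma infDist_orthProj (K : Submodule ℝ E) [CompleteSpace K] (v : E) :
    Metric.infDist v (K : Set E) = ‖v - orthogonalProjection K v‖ := by
  apply le_antisymm
  · simpa [dist_eq_norm] using Metric.infDist_le_dist_of_mem (orthogonalProjection K v).2
  · by_contra h
    push_neg at h
    rw [Metric.infDist_lt_iff ⟨0, K.zero_mem⟩] at h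
    obtain ⟨y, hy, hlt⟩ := h
    rw [dist_eq_norm] at hlt
    exact absurd (norm_sub_orthProj_le K v hy) (not_le.2 hlt)

private lemma exists_coeff {ι : Type*} [DecidableEq ι] (v : ι → E) (s : Finset ι) {y : E}
    (hy : y ∈ span ℝ (v '' ↑s)) : ∃ c : ι → ℝ, y = ∑ i ∈ s, c i • v i := by
  induction hy using Submodule.span_induction with
  | mem z hz =>
    obtain ⟨i, hi, rfl⟩ := hz
    refine ⟨fun j => if j = i then 1 else 0, ?_⟩
    simp [ite_smul, Finset.sum_ite_eq' s i (fun j => v j), Finset.mem_coe.mp hi]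
  | zero => exact ⟨0, by simp⟩
  | add a b _ _ ha hb =>
    obtain ⟨c₁, rfl⟩ := ha; obtain ⟨c₂, rfl⟩ := hb
    exact ⟨c₁ + c₂, by simp [add_smul, Finset.sum_add_distrib]⟩
  | smul a z _ hz =>
    obtain ⟨c, rfl⟩ := hz
    exact ⟨fun i => a * c i, by simp [Finset.smul_sum, mul_smul]⟩

private lemma pyth_proj (K : Submodule ℝ E) [CompleteSpace K] (v : E) :
    ‖v - orthogonalProjection K v‖ ^ 2 = ‖v‖ ^ 2 - ‖(orthogonalProjection K v : E)‖ ^ 2 := by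
  have h0 : ⟪v - orthogonalProjection K v, (orthogonalProjection K v : E)⟫ = 0 :=
    starProjection_inner_eq_zero v _ (orthogonalProjection K v).2
  have h1 := norm_add_sq_real (v - orthogonalProjection K v) (orthogonalProjection K v : E)
  rw [sub_add_cancel, h0] at h1
  linarith

private lemma stepA (K V : Submodule ℝ E) [CompleteSpace K] [CompleteSpace V]
    (hVK : V ≤ Kᗮ) (v y : E) (hy : y ∈ K ⊔ V) :
    ‖v - orthogonalProjection K v‖ ^ 2
      - ‖(orthogonalProjection V (v - orthogonalProjection K v) : E)‖ ^ 2 ≤ ‖v - y‖ ^ 2 := by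
  obtain ⟨a, ha, b, hb, hab⟩ := Submodule.mem_sup.1 hy
  have hsplit : v - y
      = ((orthogonalProjection K v : E) - a) + ((v - orthogonalProjection K v) - b) := by
    rw [← hab]; abel
  have horth : ⟪(orthogonalProjection K v : E) - a, (v - orthogonalProjection K v) - b⟫ = 0 :=
    inner_right_of_mem_orthogonal (K.sub_mem (orthogonalProjection K v).2 ha)
      (Kᗮ.sub_mem (sub_starProjection_mem_orthogonal v) (hVK hb))
  have hpyth : ‖v - y‖ ^ 2 = ‖(orthogonalProjection K v : E) - a‖ ^ 2
      + ‖(v - orthogonalProjection K v) - b‖ ^ 2 := by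
    rw [hsplit, norm_add_sq_real, horth]; ring
  have h1 : ‖(v - orthogonalProjection K v)
        - orthogonalProjection V (v - orthogonalProjection K v)‖
      ≤ ‖(v - orthogonalProjection K v) - b‖ := norm_sub_orthProj_le V _ hb
  have h2 := pyth_proj V (v - orthogonalProjection K v)
  nlinarith [norm_nonneg ((orthogonalProjection K v : E) - a),
    norm_nonneg ((v - orthogonalProjection K v) - b),
    norm_nonneg ((v - orthogonalProjection K v)
      - (orthogonalProjection V (v - orthogonalProjection K v) : E))]

private lemma stepC {ι : Type*} [DecidableEq ι] (T : Finset ι) (r : ι → E) (α : ℝ)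
    (hα0 : 0 < α) [CompleteSpace (span ℝ (r '' ↑T))]
    (hres : ∀ c : ι → ℝ, (1 / α) * ∑ i ∈ T, c i ^ 2 ≤ ‖∑ i ∈ T, c i • r i‖ ^ 2) (u : E) :
    ‖(orthogonalProjection (span ℝ (r '' ↑T)) u : E)‖ ^ 2 ≤ α * ∑ i ∈ T, ⟪u, r i⟫ ^ 2 := by
  obtain ⟨c, hc⟩ := exists_coeff r T (orthogonalProjection (span ℝ (r '' ↑T)) u).2
  have hc2 : ∑ i ∈ T, c i ^ 2
      ≤ α * ‖(orthogonalProjection (span ℝ (r '' ↑T)) u : E)‖ ^ 2 := by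
    have h := hres c
    rw [← hc, one_div, inv_mul_le_iff₀ hα0] at h
    exact h
  have h1 : ⟪u - orthogonalProjection (span ℝ (r '' ↑T)) u,
      (orthogonalProjection (span ℝ (r '' ↑T)) u : E)⟫ = 0 :=
    starProjection_inner_eq_zero u _ (orthogonalProjection (span ℝ (r '' ↑T)) u).2
  have h2 : ⟪u, (orthogonalProjection (span ℝ (r '' ↑T)) u : E)⟫
      = ‖(orthogonalProjection (span ℝ (r '' ↑T)) u : E)‖ ^ 2 := by
    rw [inner_sub_left] at h1
    rw [← real_inner_self_eq_norm_sq]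
    linarith
  have hinner : ‖(orthogonalProjection (span ℝ (r '' ↑T)) u : E)‖ ^ 2
      = ∑ i ∈ T, c i * ⟪u, r i⟫ := by
    rw [← h2, hc, inner_sum]
    exact Finset.sum_congr rfl fun i _ => real_inner_smul_right _ _ _
  have hCS : (∑ i ∈ T, c i * ⟪u, r i⟫) ^ 2
      ≤ (∑ i ∈ T, c i ^ 2) * ∑ i ∈ T, ⟪u, r i⟫ ^ 2 :=
    Finset.sum_mul_sq_le_sq_mul_sq T _ _
  have hsqn : (0:ℝ) ≤ ∑ i ∈ T, ⟪u, r i⟫ ^ 2 := Finset.sum_nonneg fun i _ => sq_nonneg _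
  rcases eq_or_lt_of_le (sq_nonneg ‖(orthogonalProjection (span ℝ (r '' ↑T)) u : E)‖) with h0 | h0
  · rw [← h0]; positivity
  · refine le_of_mul_le_mul_right ?_ h0
    calc ‖(orthogonalProjection (span ℝ (r '' ↑T)) u : E)‖ ^ 2
          * ‖(orthogonalProjection (span ℝ (r '' ↑T)) u : E)‖ ^ 2
        = (∑ i ∈ T, c i * ⟪u, r i⟫) ^ 2 := by rw [← hinner]; ring
      _ ≤ (∑ i ∈ T, c i ^ 2) * ∑ i ∈ T, ⟪u, r i⟫ ^ 2 := hCS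
      _ ≤ (α * ‖(orthogonalProjection (span ℝ (r '' ↑T)) u : E)‖ ^ 2)
            * ∑ i ∈ T, ⟪u, r i⟫ ^ 2 := mul_le_mul_of_nonneg_right hc2 hsqn
      _ = (α * ∑ i ∈ T, ⟪u, r i⟫ ^ 2)
            * ‖(orthogonalProjection (span ℝ (r '' ↑T)) u : E)‖ ^ 2 := by ring

private lemma stepB (W : Submodule ℝ E) (v p u : E) (hp : p ∈ W) (hu : u ∈ W)
    (hu0 : ‖u‖ ≠ 0) :
    (Metric.infDist v (W : Set E)) ^ 2 ≤ ‖v - p‖ ^ 2 - ⟪v - p, u⟫ ^ 2 / ‖u‖ ^ 2 := by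
  have hy : p + (⟪v - p, u⟫ / ‖u‖ ^ 2) • u ∈ W := W.add_mem hp (W.smul_mem _ hu)
  have h1 : Metric.infDist v (W : Set E) ≤ ‖(v - p) - (⟪v - p, u⟫ / ‖u‖ ^ 2) • u‖ := by
    have h2 := Metric.infDist_le_dist_of_mem (x := v) hy
    rw [dist_eq_norm] at h2
    have h3 : v - (p + (⟪v - p, u⟫ / ‖u‖ ^ 2) • u)
        = (v - p) - (⟪v - p, u⟫ / ‖u‖ ^ 2) • u := by abel
    rwa [h3] at h2
  have h4 : ‖(v - p) - (⟪v - p, u⟫ / ‖u‖ ^ 2) • u‖ ^ 2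
      = ‖v - p‖ ^ 2 - ⟪v - p, u⟫ ^ 2 / ‖u‖ ^ 2 := by
    have he := norm_sub_sq_real (v - p) ((⟪v - p, u⟫ / ‖u‖ ^ 2) • u)
    rw [real_inner_smul_right, norm_smul, mul_pow, Real.norm_eq_abs, sq_abs] at he
    rw [he]
    have hne : ‖u‖ ^ 2 ≠ 0 := pow_ne_zero _ hu0
    field_simp
    ring
  calc (Metric.infDist v (W : Set E)) ^ 2
      ≤ ‖(v - p) - (⟪v - p, u⟫ / ‖u‖ ^ 2) • u‖ ^ 2 :=
        pow_le_pow_left₀ Metric.infDist_nonneg h1 2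
    _ = ‖v - p‖ ^ 2 - ⟪v - p, u⟫ ^ 2 / ‖u‖ ^ 2 := h4

private lemma css_step
    (m n : ℕ) (α : ℝ) (hα : 1 ≤ α)
    (x : Fin n → EuclideanSpace ℝ (Fin m)) (hx : ∀ i, ‖x i‖ = 1)
    (hcond : ∀ (S : Finset (Fin n)) (w : Fin n → ℝ), (∀ i ∉ S, w i = 0) →
      (1 / α) * ∑ i ∈ S, (w i) ^ 2 ≤ ‖∑ i ∈ S, w i • x i‖ ^ 2)
    (f : Finset (Fin n) → ℝ)
    (hf : ∀ S : Finset (Fin n), f S = ∑ j : Fin n,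
      (Metric.infDist (x j)
        (Submodule.span ℝ (x '' ↑S) : Set (EuclideanSpace ℝ (Fin m)))) ^ 2)
    (k : ℕ) (hk : 1 ≤ k)
    (Sstar : Finset (Fin n)) (hSstar : Sstar.card ≤ k)
    (S : Finset (Fin n)) :
    ∃ S' : Finset (Fin n), S ⊆ S' ∧ S'.card ≤ S.card + 1 ∧
      f S' - f Sstar ≤ (1 - 1 / (α * k)) * (f S - f Sstar) := by
  have hα0 : (0:ℝ) < α := lt_of_lt_of_le one_pos hα
  have hk1 : (1:ℝ) ≤ (k:ℝ) := by exact_mod_cast hk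
  have hαk1 : (1:ℝ) ≤ α * k := by nlinarith
  have hαk0 : (0:ℝ) < α * k := by linarith
  have hβ1 : 1 / (α * k) ≤ 1 := by rw [div_le_one hαk0]; linarith
  have hβ0 : 0 < 1 / (α * k) := by positivity
  rcases le_or_gt (f S) (f Sstar) with hle | hgt
  · refine ⟨S, subset_rfl, Nat.le_succ _, ?_⟩
    have h := mul_nonpos_of_nonneg_of_nonpos (le_of_lt hβ0)
      (show f S - f Sstar ≤ 0 by linarith)
    nlinarith [h]
  -- main case
  obtain ⟨K, hKdef⟩ : ∃ K : Submodule ℝ (EuclideanSpace ℝ (Fin m)),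
      K = Submodule.span ℝ (x '' ↑S) := ⟨_, rfl⟩
  haveI hKc : CompleteSpace K := by rw [hKdef]; infer_instance
  obtain ⟨r, hrj⟩ : ∃ r : Fin n → EuclideanSpace ℝ (Fin m),
      ∀ j, r j = x j - (orthogonalProjection K (x j) : EuclideanSpace ℝ (Fin m)) :=
    ⟨_, fun _ => rfl⟩
  have hrd : ∀ j, Metric.infDist (x j) (K : Set (EuclideanSpace ℝ (Fin m))) = ‖r j‖ := by
    intro j
    rw [hrj j]
    exact infDist_orthProj K (x j)
  have hfS : f S = ∑ j, ‖r j‖ ^ 2 := by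
    rw [hf, ← hKdef]
    exact Finset.sum_congr rfl fun j _ => by rw [hrd]
  have hr1 : ∀ j, ‖r j‖ ≤ 1 := by
    intro j
    rw [← hrd j]
    calc Metric.infDist (x j) (K : Set (EuclideanSpace ℝ (Fin m))) ≤ dist (x j) 0 :=
          Metric.infDist_le_dist_of_mem K.zero_mem
      _ = 1 := by rw [dist_zero_right, hx]
  have hrperp : ∀ j, r j ∈ Kᗮ := by
    intro j
    rw [hrj j]
    exact sub_starProjection_mem_orthogonal (x j)
  obtain ⟨T, hTdef⟩ : ∃ T : Finset (Fin n), T = Sstar \ S := ⟨_, rfl⟩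
  have hdisj : Disjoint T S := hTdef ▸ Finset.sdiff_disjoint
  have hVperp : Submodule.span ℝ (r '' ↑T) ≤ Kᗮ :=
    Submodule.span_le.2 (by rintro _ ⟨i, hi, rfl⟩; exact hrperp i)
  have hxsplit : ∀ i, x i = (orthogonalProjection K (x i) : EuclideanSpace ℝ (Fin m)) + r i := by
    intro i
    rw [hrj i, add_comm]
    exact (sub_add_cancel _ _).symm
  have hKstarle : Submodule.span ℝ (x '' ↑Sstar) ≤ K ⊔ Submodule.span ℝ (r '' ↑T) := by
    apply Submodule.span_le.2
    rintro _ ⟨i, hi, rfl⟩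
    by_cases hS : i ∈ S
    · apply Submodule.mem_sup_left
      rw [hKdef]
      exact Submodule.subset_span ⟨i, by simpa using hS, rfl⟩
    · have hiT : i ∈ T := by
        rw [hTdef]
        exact Finset.mem_sdiff.2 ⟨Finset.mem_coe.1 hi, hS⟩
      rw [hxsplit i]
      exact Submodule.add_mem _
        (Submodule.mem_sup_left (orthogonalProjection K (x i)).2)
        (Submodule.mem_sup_right (Submodule.subset_span ⟨i, by simpa using hiT, rfl⟩))
  have hA : ∀ j, ‖r j‖ ^ 2
      - ‖(orthogonalProjection (Submodule.span ℝ (r '' ↑T)) (r j) : EuclideanSpace ℝ (Fin m))‖ ^ 2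
      ≤ (Metric.infDist (x j)
        (Submodule.span ℝ (x '' ↑Sstar) : Set (EuclideanSpace ℝ (Fin m)))) ^ 2 := by
    intro j
    have hy : (orthogonalProjection (Submodule.span ℝ (x '' ↑Sstar)) (x j)
          : EuclideanSpace ℝ (Fin m)) ∈ K ⊔ Submodule.span ℝ (r '' ↑T) :=
      hKstarle (orthogonalProjection (Submodule.span ℝ (x '' ↑Sstar)) (x j)).2
    have h0 := stepA K (Submodule.span ℝ (r '' ↑T)) hVperp (x j) _ hy
    rw [← hrj j] at h0
    rw [infDist_orthProj (Submodule.span ℝ (x '' ↑Sstar)) (x j)]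
    exact h0
  have hQsum : f S - f Sstar ≤ ∑ j, ‖(orthogonalProjection (Submodule.span ℝ (r '' ↑T)) (r j)
      : EuclideanSpace ℝ (Fin m))‖ ^ 2 := by
    have h1 : f S - ∑ j, ‖(orthogonalProjection (Submodule.span ℝ (r '' ↑T)) (r j)
        : EuclideanSpace ℝ (Fin m))‖ ^ 2 ≤ f Sstar := by
      rw [hf Sstar, hfS, ← Finset.sum_sub_distrib]
      exact Finset.sum_le_sum fun j _ => hA j
    linarith
  -- the well-conditioning bound on residual combinations
  have hres : ∀ c : Fin n → ℝ, (1 / α) * ∑ i ∈ T, c i ^ 2 ≤ ‖∑ i ∈ T, c i • r i‖ ^ 2 := by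
    intro c
    have hPsum : ∑ i ∈ T, c i • (orthogonalProjection K (x i) : EuclideanSpace ℝ (Fin m))
        ∈ Submodule.span ℝ (x '' ↑S) := by
      rw [← hKdef]
      exact Submodule.sum_mem _ fun i _ =>
        Submodule.smul_mem _ _ (orthogonalProjection K (x i)).2
    obtain ⟨d, hd⟩ := exists_coeff x S hPsum
    obtain ⟨w, hwdef⟩ : ∃ w : Fin n → ℝ,
        w = fun i => if i ∈ T then c i else if i ∈ S then -(d i) else 0 := ⟨_, rfl⟩
    have hwT : ∀ i ∈ T, w i = c i := fun i hi => by rw [hwdef]; simp [hi]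
    have hwS : ∀ i ∈ S, w i = -(d i) := fun i hi => by
      rw [hwdef]
      simp [Finset.disjoint_right.1 hdisj hi, hi]
    have hw0 : ∀ i ∉ T ∪ S, w i = 0 := by
      intro i hi
      rw [Finset.mem_union] at hi
      push_neg at hi
      rw [hwdef]
      simp [hi.1, hi.2]
    have hsum_eq : ∑ i ∈ T ∪ S, w i • x i = ∑ i ∈ T, c i • r i := by
      rw [Finset.sum_union hdisj]
      have h1 : ∑ i ∈ T, w i • x i = ∑ i ∈ T, c i • x i :=
        Finset.sum_congr rfl fun i hi => by rw [hwT i hi]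
      have h2 : ∑ i ∈ S, w i • x i = -∑ i ∈ S, d i • x i := by
        rw [← Finset.sum_neg_distrib]
        exact Finset.sum_congr rfl fun i hi => by rw [hwS i hi, neg_smul]
      have h3 : ∑ i ∈ T, c i • r i = ∑ i ∈ T, c i • x i - ∑ i ∈ S, d i • x i := by
        rw [← hd, ← Finset.sum_sub_distrib]
        refine Finset.sum_congr rfl fun i _ => ?_
        rw [← smul_sub, hrj i]
      rw [h1, h2, h3]
      abel
    have hwsq : ∑ i ∈ T, c i ^ 2 ≤ ∑ i ∈ T ∪ S, w i ^ 2 := by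
      rw [Finset.sum_union hdisj]
      have h1 : ∑ i ∈ T, w i ^ 2 = ∑ i ∈ T, c i ^ 2 :=
        Finset.sum_congr rfl fun i hi => by rw [hwT i hi]
      have h2 : 0 ≤ ∑ i ∈ S, w i ^ 2 := Finset.sum_nonneg fun i _ => sq_nonneg _
      linarith
    calc (1 / α) * ∑ i ∈ T, c i ^ 2 ≤ (1 / α) * ∑ i ∈ T ∪ S, w i ^ 2 := by
          have := mul_le_mul_of_nonneg_left hwsq (le_of_lt (by positivity : (0:ℝ) < 1/α))
          linarith
      _ ≤ ‖∑ i ∈ T ∪ S, w i • x i‖ ^ 2 := hcond (T ∪ S) w hw0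
      _ = ‖∑ i ∈ T, c i • r i‖ ^ 2 := by rw [hsum_eq]
  have hC : ∀ j, ‖(orthogonalProjection (Submodule.span ℝ (r '' ↑T)) (r j)
      : EuclideanSpace ℝ (Fin m))‖ ^ 2 ≤ α * ∑ i ∈ T, ⟪r j, r i⟫ ^ 2 :=
    fun j => stepC T r α hα0 hres (r j)
  obtain ⟨g, hgdef⟩ : ∃ g : Fin n → ℝ,
      g = fun i => (∑ j, ⟪r j, r i⟫ ^ 2) / ‖r i‖ ^ 2 := ⟨_, rfl⟩
  have hgle : ∀ i, (∑ j, ⟪r j, r i⟫ ^ 2) ≤ g i := by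
    intro i
    rcases eq_or_ne ‖r i‖ 0 with h0 | h0
    · have hz : ∀ j, ⟪r j, r i⟫ = (0:ℝ) := fun j => by
        rw [norm_eq_zero.1 h0, inner_zero_right]
      rw [hgdef]
      simp [hz]
    · have h1 : 0 < ‖r i‖ ^ 2 := by positivity
      rw [hgdef]
      simp only
      rw [le_div_iff₀ h1]
      have h2 : ‖r i‖ ^ 2 ≤ 1 := by nlinarith [hr1 i, norm_nonneg (r i)]
      have h3 : (0:ℝ) ≤ ∑ j, ⟪r j, r i⟫ ^ 2 :=
        Finset.sum_nonneg fun j _ => sq_nonneg _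
      nlinarith
  have hsum3 : f S - f Sstar ≤ α * ∑ i ∈ T, g i := by
    calc f S - f Sstar
        ≤ ∑ j, ‖(orthogonalProjection (Submodule.span ℝ (r '' ↑T)) (r j)
            : EuclideanSpace ℝ (Fin m))‖ ^ 2 := hQsum
      _ ≤ ∑ j, α * ∑ i ∈ T, ⟪r j, r i⟫ ^ 2 := Finset.sum_le_sum fun j _ => hC j
      _ = α * ∑ i ∈ T, ∑ j, ⟪r j, r i⟫ ^ 2 := by rw [← Finset.mul_sum, Finset.sum_comm]
      _ ≤ α * ∑ i ∈ T, g i :=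
          mul_le_mul_of_nonneg_left (Finset.sum_le_sum fun i _ => hgle i) (le_of_lt hα0)
  have hTne : T.Nonempty := by
    rw [Finset.nonempty_iff_ne_empty]
    intro h
    rw [h] at hsum3
    simp at hsum3
    linarith
  have hTcard : (0:ℝ) < (T.card : ℝ) := by exact_mod_cast hTne.card_pos
  have hTk : (T.card : ℝ) ≤ (k : ℝ) := by
    have : T.card ≤ k := by
      rw [hTdef]
      exact le_trans (Finset.card_le_card Finset.sdiff_subset) hSstar
    exact_mod_cast this
  have hav : ∑ _i ∈ T, (f S - f Sstar) / (α * T.card) ≤ ∑ i ∈ T, g i := by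
    rw [Finset.sum_const, nsmul_eq_mul]
    have he : (T.card:ℝ) * ((f S - f Sstar) / (α * T.card)) = (f S - f Sstar) / α := by
      rw [mul_comm α, ← div_div, mul_div_assoc', mul_div_cancel₀ _ (ne_of_gt hTcard)]
    rw [he, div_le_iff₀ hα0]
    nlinarith [hsum3]
  obtain ⟨i, hiT, hige⟩ := Finset.exists_le_of_sum_le hTne hav
  have havg : (f S - f Sstar) / (α * k) ≤ g i := by
    refine le_trans ?_ hige
    exact div_le_div_of_nonneg_left (by linarith) (mul_pos hα0 hTcard) (by nlinarith)
  have hgpos : 0 < g i := lt_of_lt_of_le (div_pos (by linarith) hαk0) havg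
  have hri : ‖r i‖ ≠ 0 := by
    intro h0
    have hz : ∀ j, ⟪r j, r i⟫ = (0:ℝ) := fun j => by
      rw [norm_eq_zero.1 h0, inner_zero_right]
    rw [hgdef] at hgpos
    simp [hz] at hgpos
  -- adding column i gains at least g i
  have hiK : x i ∈ Submodule.span ℝ (x '' ↑(insert i S)) :=
    Submodule.subset_span ⟨i, by simp, rfl⟩
  have hle2 : K ≤ Submodule.span ℝ (x '' ↑(insert i S)) := by
    rw [hKdef]
    exact Submodule.span_mono
      (Set.image_mono (Finset.coe_subset.2 (Finset.subset_insert i S)))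
  have hri_mem : r i ∈ Submodule.span ℝ (x '' ↑(insert i S)) := by
    rw [hrj i]
    exact Submodule.sub_mem _ hiK (hle2 (orthogonalProjection K (x i)).2)
  have hB : ∀ j, (Metric.infDist (x j)
      (Submodule.span ℝ (x '' ↑(insert i S)) : Set (EuclideanSpace ℝ (Fin m)))) ^ 2
      ≤ ‖r j‖ ^ 2 - ⟪r j, r i⟫ ^ 2 / ‖r i‖ ^ 2 := by
    intro j
    have h0 := stepB (Submodule.span ℝ (x '' ↑(insert i S))) (x j)
      (orthogonalProjection K (x j) : EuclideanSpace ℝ (Fin m)) (r i)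
      (hle2 (orthogonalProjection K (x j)).2) hri_mem hri
    rwa [← hrj j] at h0
  have hfi : f (insert i S) ≤ f S - g i := by
    rw [hf (insert i S), hfS]
    have h1 : ∑ j, ((Metric.infDist (x j)
        (Submodule.span ℝ (x '' ↑(insert i S)) : Set (EuclideanSpace ℝ (Fin m)))) ^ 2)
        ≤ ∑ j, (‖r j‖ ^ 2 - ⟪r j, r i⟫ ^ 2 / ‖r i‖ ^ 2) :=
      Finset.sum_le_sum fun j _ => hB j
    have h2 : ∑ j, (‖r j‖ ^ 2 - ⟪r j, r i⟫ ^ 2 / ‖r i‖ ^ 2)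
        = (∑ j, ‖r j‖ ^ 2) - g i := by
      rw [Finset.sum_sub_distrib, hgdef]
      simp only
      rw [Finset.sum_div]
    linarith
  refine ⟨insert i S, Finset.subset_insert i S, Finset.card_insert_le i S, ?_⟩
  have hid : (1 - 1 / (α * ↑k)) * (f S - f Sstar)
      = (f S - f Sstar) - (f S - f Sstar) / (α * ↑k) := by ring
  rw [hid]
  linarith

private lemma css_iter
    (m n : ℕ) (α : ℝ) (hα : 1 ≤ α)
    (x : Fin n → EuclideanSpace ℝ (Fin m)) (hx : ∀ i, ‖x i‖ = 1)
    (hcond : ∀ (S : Finset (Fin n)) (w : Fin n → ℝ), (∀ i ∉ S, w i = 0) →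
      (1 / α) * ∑ i ∈ S, (w i) ^ 2 ≤ ‖∑ i ∈ S, w i • x i‖ ^ 2)
    (f : Finset (Fin n) → ℝ)
    (hf : ∀ S : Finset (Fin n), f S = ∑ j : Fin n,
      (Metric.infDist (x j)
        (Submodule.span ℝ (x '' ↑S) : Set (EuclideanSpace ℝ (Fin m)))) ^ 2)
    (k : ℕ) (hk : 1 ≤ k)
    (Sstar : Finset (Fin n)) (hSstar : Sstar.card ≤ k)
    (S₀ : Finset (Fin n)) (t : ℕ) :
    ∃ S : Finset (Fin n), S₀ ⊆ S ∧ S.card ≤ S₀.card + t ∧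
      f S - f Sstar ≤ (1 - 1 / (α * k)) ^ t * (f S₀ - f Sstar) := by
  have hα0 : (0:ℝ) < α := lt_of_lt_of_le one_pos hα
  have hk1 : (1:ℝ) ≤ (k:ℝ) := by exact_mod_cast hk
  have hαk1 : (1:ℝ) ≤ α * k := by nlinarith
  have hβnn : 0 ≤ 1 - 1 / (α * k) := by
    have : 1 / (α * k) ≤ 1 := by rw [div_le_one (by linarith)]; linarith
    linarith
  induction t with
  | zero => exact ⟨S₀, subset_rfl, by simp, by simp⟩
  | succ t ih =>
    obtain ⟨S, hsub, hcard, hval⟩ := ih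
    obtain ⟨S', hsub', hcard', hval'⟩ :=
      css_step m n α hα x hx hcond f hf k hk Sstar hSstar S
    refine ⟨S', hsub.trans hsub', by omega, ?_⟩
    calc f S' - f Sstar ≤ (1 - 1 / (α * k)) * (f S - f Sstar) := hval'
      _ ≤ (1 - 1 / (α * k)) * ((1 - 1 / (α * k)) ^ t * (f S₀ - f Sstar)) :=
          mul_le_mul_of_nonneg_left hval hβnn
      _ = (1 - 1 / (α * k)) ^ (t + 1) * (f S₀ - f Sstar) := by ring

end

/-- Bicriteria guarantee for column subset selection: starting from a `ρ`-approximate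
solution `S₀`, a greedy extension with at most `⌈α k ln(ρ/δ)⌉` additional columns is a
`(1+δ)`-approximation. -/
theorem column_subset_selection_greedy
    (m n : ℕ) (α : ℝ) (hα : 1 ≤ α)
    (x : Fin n → EuclideanSpace ℝ (Fin m)) (hx : ∀ i, ‖x i‖ = 1)
    (hcond : ∀ (S : Finset (Fin n)) (w : Fin n → ℝ), (∀ i ∉ S, w i = 0) →
      (1 / α) * ∑ i ∈ S, (w i) ^ 2 ≤ ‖∑ i ∈ S, w i • x i‖ ^ 2)
    (f : Finset (Fin n) → ℝ)
    (hf : ∀ S : Finset (Fin n), f S = ∑ j : Fin n,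
      (Metric.infDist (x j)
        (Submodule.span ℝ (x '' ↑S) : Set (EuclideanSpace ℝ (Fin m)))) ^ 2)
    (k : ℕ) (hk : 1 ≤ k)
    (Sstar : Finset (Fin n)) (hSstar : Sstar.card ≤ k) (hpos : 0 < f Sstar)
    (ρ δ : ℝ) (hρ : 1 ≤ ρ) (hδ : 0 < δ) (hδρ : δ ≤ ρ)
    (S₀ : Finset (Fin n)) (hS₀ : f S₀ ≤ ρ * f Sstar) :
    ∃ S : Finset (Fin n), S₀ ⊆ S ∧
      S.card ≤ S₀.card + ⌈α * (k : ℝ) * Real.log (ρ / δ)⌉₊ ∧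
      f S ≤ (1 + δ) * f Sstar := by
  have hα0 : (0:ℝ) < α := lt_of_lt_of_le one_pos hα
  have hk1 : (1:ℝ) ≤ (k:ℝ) := by exact_mod_cast hk
  have hαk1 : (1:ℝ) ≤ α * k := by nlinarith
  have hαk0 : (0:ℝ) < α * k := by linarith
  have hρ0 : (0:ℝ) < ρ := by linarith
  have hρδ0 : (0:ℝ) < ρ / δ := by positivity
  set t : ℕ := ⌈α * (k : ℝ) * Real.log (ρ / δ)⌉₊ with htdef
  obtain ⟨S, hsub, hcard, hval⟩ :=
    css_iter m n α hα x hx hcond f hf k hk Sstar hSstar S₀ t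
  refine ⟨S, hsub, hcard, ?_⟩
  have hβnn : 0 ≤ 1 - 1 / (α * k) := by
    have : 1 / (α * k) ≤ 1 := by rw [div_le_one hαk0]; linarith
    linarith
  -- (1 - 1/(αk))^t ≤ δ/ρ
  have hlogt : α * k * Real.log (ρ / δ) ≤ (t : ℝ) := Nat.le_ceil _
  have hexp1 : 1 - 1 / (α * k) ≤ Real.exp (-(1 / (α * k))) := by
    have := Real.add_one_le_exp (-(1 / (α * k)))
    linarith
  have hpow : (1 - 1 / (α * k)) ^ t ≤ Real.exp (-(1 / (α * k))) ^ t :=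
    pow_le_pow_left₀ hβnn hexp1 t
  have hexp2 : Real.exp (-(1 / (α * k))) ^ t = Real.exp (-(t / (α * k))) := by
    rw [← Real.exp_nat_mul]
    congr 1
    field_simp
  have hexp3 : Real.exp (-(t / (α * k))) ≤ Real.exp (-Real.log (ρ / δ)) := by
    apply Real.exp_le_exp.2
    have : Real.log (ρ / δ) ≤ (t : ℝ) / (α * k) := by
      rw [le_div_iff₀ hαk0]
      nlinarith [hlogt]
    linarith
  have hexp4 : Real.exp (-Real.log (ρ / δ)) = δ / ρ := by
    rw [Real.exp_neg, Real.exp_log hρδ0, inv_div]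
  have hfinal : (1 - 1 / (α * k)) ^ t ≤ δ / ρ := by
    rw [← hexp4]
    calc (1 - 1 / (α * k)) ^ t ≤ Real.exp (-(1 / (α * k))) ^ t := hpow
      _ = Real.exp (-(t / (α * k))) := hexp2
      _ ≤ Real.exp (-Real.log (ρ / δ)) := hexp3
  have hgap : (1 - 1 / (α * k)) ^ t * (f S₀ - f Sstar) ≤ δ * f Sstar := by
    rcases le_or_gt (f S₀ - f Sstar) 0 with hneg | hposgap
    · have h1 : (1 - 1 / (α * k)) ^ t * (f S₀ - f Sstar) ≤ 0 :=
        mul_nonpos_of_nonneg_of_nonpos (pow_nonneg hβnn t) hneg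
      nlinarith
    · calc (1 - 1 / (α * k)) ^ t * (f S₀ - f Sstar)
          ≤ (δ / ρ) * (f S₀ - f Sstar) :=
            mul_le_mul_of_nonneg_right hfinal (le_of_lt hposgap)
        _ ≤ (δ / ρ) * ((ρ - 1) * f Sstar) := by
            apply mul_le_mul_of_nonneg_left _ (by positivity)
            nlinarith
        _ ≤ δ * f Sstar := by
            rw [div_mul_eq_mul_div, div_le_iff₀ hρ0]
            nlinarith
  linarith
end

section
/- Let x_1, …, x_n ∈ ℝ^m and suppose there exist reals 0 < σ ≤ Σ such that σ·‖w‖ ≤ ‖Σ_{i=1}^n w_i x_i‖ ≤ Σ·‖w‖ for every w ∈ ℝ^n. Define the column subset selection objective f(S) = Σ_{j=1}^n dist(x_j, span{x_i : i ∈ S})². Then for every j ∈ Fin n and all S, T ⊆ Fin n \ {j}, f(S) − f(S ∪ {j}) ≥ (σ²/Σ²) · ( f(T) − f(T ∪ {j}) ). -/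
open Metric Submodule


lemma css_infDist_eq {E : Type*} [NormedAddCommGroup E] [InnerProductSpace ℝ E]
    (K : Submodule ℝ E) [HasOrthogonalProjection K] (y : E) :
    Metric.infDist y (K : Set E) = ‖y - orthogonalProjection K y‖ := by
  rw [Metric.infDist_eq_iInf, ← starProjection_apply, starProjection_minimal]
  congr 1; ext z; rw [dist_eq_norm]

lemma css_key {E : Type*} [NormedAddCommGroup E] [InnerProductSpace ℝ E]
    (K : Submodule ℝ E) [HasOrthogonalProjection K] (u : E) (hu : ‖u‖ = 1)
    (huK : u ∈ Kᗮ) [HasOrthogonalProjection (K ⊔ (ℝ ∙ u))] (y : E) :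
    Metric.infDist y ((K ⊔ (ℝ ∙ u) : Submodule ℝ E) : Set E) ^ 2
      = Metric.infDist y (K : Set E) ^ 2 - (inner ℝ u y : ℝ) ^ 2 := by
  set P : E := (orthogonalProjection K y : E) with hP
  set c : ℝ := inner ℝ u y with hc
  set p : E := P + c • u with hp
  have huu : (inner ℝ u u : ℝ) = 1 := by
    rw [real_inner_self_eq_norm_sq, hu]; norm_num
  have hPu : (inner ℝ P u : ℝ) = 0 := huK P (orthogonalProjection K y).2
  have hpmem : p ∈ K ⊔ (ℝ ∙ u) :=
    add_mem_sup (orthogonalProjection K y).2 (smul_mem _ c (mem_span_singleton_self u))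
  have hyu : (inner ℝ (y - p) u : ℝ) = 0 := by
    rw [hp, inner_sub_left, inner_add_left, inner_smul_left, hPu, huu, hc,
      real_inner_comm u y]
    simp
  have hortho : ∀ w ∈ K ⊔ (ℝ ∙ u), (inner ℝ (y - p) w : ℝ) = 0 := by
    intro w hw
    obtain ⟨v, hv, z, hz, rfl⟩ := Submodule.mem_sup.mp hw
    obtain ⟨t, rfl⟩ := mem_span_singleton.mp hz
    have h1 : (inner ℝ (y - P) v : ℝ) = 0 := by
      have := (sub_starProjection_mem_orthogonal (K := K) y) v hv
      rw [starProjection_apply] at this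
      rwa [real_inner_comm] at this
    have h2 : (inner ℝ u v : ℝ) = 0 := by have := huK v hv; rwa [real_inner_comm] at this
    have hsplit : y - p = (y - P) - c • u := by rw [hp]; abel
    rw [inner_add_right, inner_smul_right, hyu, hsplit, inner_sub_left,
      inner_smul_left, h1, h2]
    ring
  have hproj : (orthogonalProjection (K ⊔ (ℝ ∙ u)) y : E) = p :=
    by have := eq_starProjection_of_mem_of_inner_eq_zero hpmem hortho; rwa [starProjection_apply] at this
  have hPy : y - P = (y - p) + c • u := by rw [hp]; abel
  have hpyth : ‖y - P‖ ^ 2 = ‖y - p‖ ^ 2 + c ^ 2 := by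
    rw [hPy, norm_add_sq_real]
    have h0 : (inner ℝ (y - p) (c • u) : ℝ) = 0 := by rw [inner_smul_right, hyu]; ring
    rw [h0, norm_smul, hu, mul_one, Real.norm_eq_abs, sq_abs]; ring
  rw [css_infDist_eq, css_infDist_eq, hproj, ← hP, hpyth]
  ring


lemma css_upper (m n : ℕ) (x : Fin n → EuclideanSpace ℝ (Fin m)) (σ₂ : ℝ) (hσ₂ : 0 ≤ σ₂)
    (hupper : ∀ w : Fin n → ℝ,
      ‖∑ i : Fin n, w i • x i‖ ≤ σ₂ * Real.sqrt (∑ i : Fin n, (w i) ^ 2))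
    (u : EuclideanSpace ℝ (Fin m)) (hu : ‖u‖ = 1) :
    ∑ k : Fin n, (inner ℝ u (x k) : ℝ) ^ 2 ≤ σ₂ ^ 2 := by
  set w : Fin n → ℝ := fun k => (inner ℝ u (x k) : ℝ) with hw
  set s : ℝ := ∑ k, w k ^ 2 with hs
  have hs0 : 0 ≤ s := Finset.sum_nonneg fun i _ => sq_nonneg _
  have h1 : s = inner ℝ u (∑ i, w i • x i) := by
    rw [hs, inner_sum]
    exact Finset.sum_congr rfl fun i _ => by rw [real_inner_smul_right, sq]
  have h2 : s ≤ ‖∑ i, w i • x i‖ := by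
    calc s = inner ℝ u (∑ i, w i • x i) := h1
    _ ≤ ‖u‖ * ‖∑ i, w i • x i‖ := real_inner_le_norm _ _
    _ = ‖∑ i, w i • x i‖ := by rw [hu, one_mul]
  have h3 : s ≤ σ₂ * Real.sqrt s := le_trans h2 (hupper w)
  nlinarith [Real.sq_sqrt hs0, Real.sqrt_nonneg s]

lemma css_lower (m n : ℕ) (x : Fin n → EuclideanSpace ℝ (Fin m)) (σ₁ : ℝ) (hσ₁ : 0 < σ₁)
    (hlower : ∀ w : Fin n → ℝ,
      σ₁ * Real.sqrt (∑ i : Fin n, (w i) ^ 2) ≤ ‖∑ i : Fin n, w i • x i‖)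
    (u : EuclideanSpace ℝ (Fin m)) (hu : ‖u‖ = 1)
    (c : Fin n → ℝ) (hc : ∑ i, c i • x i = u) :
    σ₁ ^ 2 ≤ ∑ k : Fin n, (inner ℝ u (x k) : ℝ) ^ 2 := by
  set w : Fin n → ℝ := fun k => (inner ℝ u (x k) : ℝ) with hw
  set s : ℝ := ∑ k, w k ^ 2 with hs
  set t : ℝ := ∑ k, c k ^ 2 with ht
  have hs0 : 0 ≤ s := Finset.sum_nonneg fun i _ => sq_nonneg _
  have ht0 : 0 ≤ t := Finset.sum_nonneg fun i _ => sq_nonneg _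
  have h1 : (1 : ℝ) = ∑ i, c i * w i := by
    have huu : (inner ℝ u u : ℝ) = 1 := by rw [real_inner_self_eq_norm_sq, hu]; norm_num
    have h0 : (inner ℝ (∑ i, c i • x i) u : ℝ) = 1 := by rw [hc, huu]
    rw [sum_inner] at h0
    rw [← h0]
    exact Finset.sum_congr rfl fun i _ => by
      rw [real_inner_smul_left, real_inner_comm]
  have hCS : (1 : ℝ) ≤ t * s := by
    calc (1:ℝ) = (∑ i, c i * w i) ^ 2 := by rw [← h1]; norm_num
    _ ≤ t * s := Finset.sum_mul_sq_le_sq_mul_sq _ _ _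
  have h2 : σ₁ * Real.sqrt t ≤ 1 := by
    have := hlower c
    rwa [hc, hu, ← ht] at this
  have h3 : σ₁ ^ 2 * t ≤ 1 := by
    nlinarith [Real.sq_sqrt ht0, Real.sqrt_nonneg t,
      mul_nonneg hσ₁.le (Real.sqrt_nonneg t)]
  nlinarith [mul_nonneg (mul_nonneg (sq_nonneg σ₁) ht0) hs0]


lemma css_infDist_eq' {E : Type*} [NormedAddCommGroup E] [InnerProductSpace ℝ E]
    (K : Submodule ℝ E) [HasOrthogonalProjection K] (y : E) :
    Metric.infDist y (K : Set E) = ‖y - orthogonalProjection K y‖ := by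
  rw [Metric.infDist_eq_iInf, ← starProjection_apply, starProjection_minimal]
  congr 1; ext z; rw [dist_eq_norm]

-- gap formula
lemma css_gap (m n : ℕ) (x : Fin n → EuclideanSpace ℝ (Fin m))
    (hli : LinearIndependent ℝ x)
    (f : Finset (Fin n) → ℝ)
    (hf : ∀ S : Finset (Fin n), f S = ∑ j : Fin n,
      (Metric.infDist (x j)
        (Submodule.span ℝ (x '' ↑S) : Set (EuclideanSpace ℝ (Fin m)))) ^ 2)
    (j : Fin n) (S : Finset (Fin n)) (hjS : j ∉ S) :
    ∃ u : EuclideanSpace ℝ (Fin m), ‖u‖ = 1 ∧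
      u ∈ Submodule.span ℝ (Set.range x) ∧
      f S - f (S ∪ {j}) = ∑ k : Fin n, (inner ℝ u (x k) : ℝ) ^ 2 := by
  set W : Submodule ℝ (EuclideanSpace ℝ (Fin m)) := Submodule.span ℝ (x '' ↑S) with hW
  have hnot : x j ∉ W := hli.notMem_span_image (by simpa using hjS)
  set P : EuclideanSpace ℝ (Fin m) := (orthogonalProjection W (x j) : EuclideanSpace ℝ (Fin m)) with hP
  set r : EuclideanSpace ℝ (Fin m) := x j - P with hr
  have hr0 : r ≠ 0 := by
    intro h
    apply hnot
    have : x j = P := by rw [← sub_eq_zero]; exact h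
    rw [this]; exact (orthogonalProjection W (x j)).2
  set u : EuclideanSpace ℝ (Fin m) := ‖r‖⁻¹ • r with hu
  have hun : ‖u‖ = 1 := norm_smul_inv_norm hr0
  have hrW : r ∈ Wᗮ := by
    have := sub_starProjection_mem_orthogonal (K := W) (x j); rwa [starProjection_apply] at this
  have huW : u ∈ Wᗮ := Submodule.smul_mem _ _ hrW
  have hru : r = ‖r‖ • u := by
    rw [hu, smul_smul, mul_inv_cancel₀ (norm_ne_zero_iff.mpr hr0), one_smul]
  -- span equality
  have hsp : Submodule.span ℝ (x '' ↑(S ∪ {j})) = W ⊔ (ℝ ∙ u) := by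
    have himg : x '' ↑(S ∪ {j}) = x '' ↑S ∪ {x j} := by
      rw [Finset.coe_union, Finset.coe_singleton, Set.image_union, Set.image_singleton]
    rw [himg, Submodule.span_union, ← hW]
    apply le_antisymm
    · refine sup_le le_sup_left ?_
      rw [Submodule.span_le, Set.singleton_subset_iff]
      have : x j = P + ‖r‖ • u := by rw [← hru, hr]; abel
      rw [this]
      exact add_mem_sup (orthogonalProjection W (x j)).2
        (Submodule.smul_mem _ _ (Submodule.mem_span_singleton_self u))
    · refine sup_le le_sup_left ?_
      rw [Submodule.span_le, Set.singleton_subset_iff]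
      have hxj : x j ∈ W ⊔ Submodule.span ℝ {x j} :=
        Submodule.mem_sup_right (Submodule.mem_span_singleton_self _)
      have hPm : P ∈ W ⊔ Submodule.span ℝ {x j} :=
        Submodule.mem_sup_left (orthogonalProjection W (x j)).2
      exact Submodule.smul_mem _ _ (sub_mem hxj hPm)
  refine ⟨u, hun, ?_, ?_⟩
  · have hWle : W ≤ Submodule.span ℝ (Set.range x) :=
      Submodule.span_mono (Set.image_subset_range _ _)
    have hxjm : x j ∈ Submodule.span ℝ (Set.range x) :=
      Submodule.subset_span ⟨j, rfl⟩
    exact Submodule.smul_mem _ _ (sub_mem hxjm (hWle (orthogonalProjection W (x j)).2))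
  · rw [hf S, hf (S ∪ {j}), ← Finset.sum_sub_distrib]
    refine Finset.sum_congr rfl fun k _ => ?_
    have := css_key (E := EuclideanSpace ℝ (Fin m)) W u hun huW (x k)
    rw [hsp]
    rw [this]
    ring

/-- Curvature bound for the column subset selection objective: if all singular values of
the matrix with columns `x i` lie in `[σ₁, σ₂]`, then for every `j` and all
`S, T ⊆ [n] \ {j}`, `f S - f (S ∪ {j}) ≥ (σ₁²/σ₂²) * (f T - f (T ∪ {j}))`. -/
theorem column_subset_selection_curvature
    (m n : ℕ) (x : Fin n → EuclideanSpace ℝ (Fin m))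
    (σ₁ σ₂ : ℝ) (hσ₁ : 0 < σ₁) (hσ₁₂ : σ₁ ≤ σ₂)
    (hlower : ∀ w : Fin n → ℝ,
      σ₁ * Real.sqrt (∑ i : Fin n, (w i) ^ 2) ≤ ‖∑ i : Fin n, w i • x i‖)
    (hupper : ∀ w : Fin n → ℝ,
      ‖∑ i : Fin n, w i • x i‖ ≤ σ₂ * Real.sqrt (∑ i : Fin n, (w i) ^ 2))
    (f : Finset (Fin n) → ℝ)
    (hf : ∀ S : Finset (Fin n), f S = ∑ j : Fin n,
      (Metric.infDist (x j)
        (Submodule.span ℝ (x '' ↑S) : Set (EuclideanSpace ℝ (Fin m)))) ^ 2)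
    (j : Fin n) (S T : Finset (Fin n)) (hjS : j ∉ S) (hjT : j ∉ T) :
    (σ₁ ^ 2 / σ₂ ^ 2) * (f T - f (T ∪ {j})) ≤ f S - f (S ∪ {j}) := by
  have hσ₂ : 0 < σ₂ := lt_of_lt_of_le hσ₁ hσ₁₂
  have hli : LinearIndependent ℝ x := by
    rw [Fintype.linearIndependent_iff]
    intro g hg i
    have h1 := hlower g
    rw [hg, norm_zero] at h1
    have h2 : Real.sqrt (∑ i, g i ^ 2) = 0 := by
      nlinarith [Real.sqrt_nonneg (∑ i : Fin n, g i ^ 2)]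
    have h3 : (∑ i, g i ^ 2) = 0 :=
      (Real.sqrt_eq_zero (Finset.sum_nonneg fun i _ => sq_nonneg _)).mp h2
    have := (Finset.sum_eq_zero_iff_of_nonneg (fun i _ => sq_nonneg (g i))).mp h3 i
      (Finset.mem_univ i)
    exact pow_eq_zero_iff (by norm_num) |>.mp this
  obtain ⟨uS, huS1, huSsp, hgapS⟩ := css_gap m n x hli f hf j S hjS
  obtain ⟨uT, huT1, _, hgapT⟩ := css_gap m n x hli f hf j T hjT
  obtain ⟨c, hc⟩ := (mem_span_range_iff_exists_fun ℝ).mp huSsp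
  have hS : σ₁ ^ 2 ≤ f S - f (S ∪ {j}) := by
    rw [hgapS]; exact css_lower m n x σ₁ hσ₁ hlower uS huS1 c hc
  have hT : f T - f (T ∪ {j}) ≤ σ₂ ^ 2 := by
    rw [hgapT]; exact css_upper m n x σ₂ hσ₂.le hupper uT huT1
  calc (σ₁ ^ 2 / σ₂ ^ 2) * (f T - f (T ∪ {j}))
      ≤ (σ₁ ^ 2 / σ₂ ^ 2) * σ₂ ^ 2 := by
        apply mul_le_mul_of_nonneg_left hT
        positivity
    _ = σ₁ ^ 2 := by field_simp
    _ ≤ f S - f (S ∪ {j}) := hS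
end
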